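/- arXiv:2212.06990 — 7 statements merged into one kernel-verified Lean document; each statement's English description precedes it below -/
import Mathlib

section
/- Let Φ be an (m+p)×(m+p) matrix over K = RatFunc ℂ, partitioned into blocks Φ11 (m×m), Φ12 (m×p), Φ21 (p×m), Φ22 (p×p), and let W be an (m+p)×m matrix over K, partitioned as W = [W1; W2] with W1 an m×m block, such that W1 is invertible over K and Φ = W W*. Then Φ11 = W1 W1* is invertible over K and W2 = H W1, where H := Φ21 Φ11⁻¹. Moreover this relation does not depend on the choice of factor: if V = [V1; V2] is any other (m+p)×m matrix over K with V1 invertible and V V* = Φ, then V2 V1⁻¹ = W2 W1⁻¹ = H. (Theorem 2.1 of the paper: the deterministic relation inside a tall spectral factor.) -/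
open Matrix

noncomputable section

abbrev K : Type := RatFunc ℂ

/-- `W*`: the transpose of the entrywise application of `σ`. -/
def paraStar {I J : Type} (σ : K →+* K) (W : Matrix I J K) : Matrix J I K := (W.map σ)ᵀ

lemma paraStar_fromRows {I₁ I₂ J : Type} (σ : K →+* K) (A : Matrix I₁ J K) (B : Matrix I₂ J K) :
    paraStar σ (Matrix.fromRows A B) = Matrix.fromCols (paraStar σ A) (paraStar σ B) := by
  ext i (j | j) <;> rfl

lemma paraStar_det_isUnit {n : ℕ} (σ : K →+* K) (A : Matrix (Fin n) (Fin n) K)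
    (hA : IsUnit A.det) : IsUnit (paraStar σ A).det := by
  rw [paraStar, Matrix.det_transpose]
  have h : (A.map ⇑σ).det = σ A.det := (RingHom.map_det σ A).symm
  rw [h]; exact hA.map σ

lemma key_lemma {m p : ℕ} (σ : K →+* K)
    (Φ11 : Matrix (Fin m) (Fin m) K) (Φ12 : Matrix (Fin m) (Fin p) K)
    (Φ21 : Matrix (Fin p) (Fin m) K) (Φ22 : Matrix (Fin p) (Fin p) K)
    (W1 : Matrix (Fin m) (Fin m) K) (W2 : Matrix (Fin p) (Fin m) K)
    (hW1 : IsUnit W1.det)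
    (hFac : Matrix.fromBlocks Φ11 Φ12 Φ21 Φ22
      = (Matrix.fromRows W1 W2) * paraStar σ (Matrix.fromRows W1 W2)) :
    Φ11 = W1 * paraStar σ W1 ∧ Φ21 = W2 * paraStar σ W1 ∧ IsUnit Φ11.det ∧
      Φ21 * Φ11⁻¹ = W2 * W1⁻¹ := by
  rw [paraStar_fromRows, Matrix.fromRows_mul_fromCols] at hFac
  have h11 : Φ11 = W1 * paraStar σ W1 := congrArg Matrix.toBlocks₁₁ hFac
  have h21 : Φ21 = W2 * paraStar σ W1 := congrArg Matrix.toBlocks₂₁ hFac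
  have hS : IsUnit (paraStar σ W1).det := paraStar_det_isUnit σ W1 hW1
  have hΦ : IsUnit Φ11.det := by
    rw [h11, Matrix.det_mul]; exact hW1.mul hS
  refine ⟨h11, h21, hΦ, ?_⟩
  rw [h11, h21, Matrix.mul_inv_rev, Matrix.mul_assoc, ← Matrix.mul_assoc (paraStar σ W1),
    Matrix.mul_nonsing_inv _ hS, Matrix.one_mul]

theorem deterministic_relation (m p : ℕ)
    (σ : K →+* K)
    (hσC : ∀ c : ℂ, σ (RatFunc.C c) = RatFunc.C ((starRingEnd ℂ) c))
    (hσX : σ RatFunc.X = RatFunc.X⁻¹)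
    (Φ11 : Matrix (Fin m) (Fin m) K) (Φ12 : Matrix (Fin m) (Fin p) K)
    (Φ21 : Matrix (Fin p) (Fin m) K) (Φ22 : Matrix (Fin p) (Fin p) K)
    (W1 : Matrix (Fin m) (Fin m) K) (W2 : Matrix (Fin p) (Fin m) K)
    (hW1 : IsUnit W1.det)
    (hFac : Matrix.fromBlocks Φ11 Φ12 Φ21 Φ22
      = (Matrix.fromRows W1 W2) * paraStar σ (Matrix.fromRows W1 W2)) :
    Φ11 = W1 * paraStar σ W1 ∧ IsUnit Φ11.det ∧
    W2 = (Φ21 * Φ11⁻¹) * W1 ∧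
    ∀ (V1 : Matrix (Fin m) (Fin m) K) (V2 : Matrix (Fin p) (Fin m) K),
      IsUnit V1.det →
      Matrix.fromBlocks Φ11 Φ12 Φ21 Φ22
        = (Matrix.fromRows V1 V2) * paraStar σ (Matrix.fromRows V1 V2) →
      V2 * V1⁻¹ = W2 * W1⁻¹ ∧ W2 * W1⁻¹ = Φ21 * Φ11⁻¹ := by
  obtain ⟨h11, h21, hΦ, hkey⟩ := key_lemma σ Φ11 Φ12 Φ21 Φ22 W1 W2 hW1 hFac
  refine ⟨h11, hΦ, ?_, ?_⟩
  · rw [hkey, Matrix.mul_assoc, Matrix.nonsing_inv_mul _ hW1, Matrix.mul_one]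
  · intro V1 V2 hV1 hVFac
    obtain ⟨_, _, _, hkey'⟩ := key_lemma σ Φ11 Φ12 Φ21 Φ22 V1 V2 hV1 hVFac
    exact ⟨hkey'.symm.trans hkey, hkey.symm⟩
end
end

section
/- Let Q be an m×m matrix over K = RatFunc ℂ such that Q Q* = 1 (the identity matrix over K). If every entry of Q is proper and every pole α of Q satisfies |α| < 1, and every entry of Q⁻¹ (= Q*) is proper and every pole α of Q⁻¹ satisfies |α| ≤ 1, then Q is a constant matrix: there is a unitary matrix U ∈ M_m(ℂ) with Q = U mapped into K entrywise via RatFunc.C. (Key step in the proof of the paper's Lemma 2.3: an inner rational matrix that is also minimum-phase is a constant unitary matrix.) -/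
open Matrix

noncomputable section

/-- `α` is a pole of `q`: a root of the denominator of `q` in lowest terms. -/
def IsPole (α : ℂ) (q : K) : Prop := Polynomial.eval α (RatFunc.denom q) = 0

/-- `α` is a pole of a matrix if it is a pole of some entry. -/
def MIsPole {I J : Type} (α : ℂ) (W : Matrix I J K) : Prop := ∃ i j, IsPole α (W i j)

/-- `q` is proper: `0` is not a pole of `τ q` (where `τ` maps `X` to `X⁻¹`). -/
def Proper (τ : K →+* K) (q : K) : Prop := ¬ IsPole 0 (τ q)

open Polynomial in
/-- If `q = A / B` with `B β = 0` and `A β ≠ 0` then `β` is a pole of `q`. -/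
lemma pole_of_div (q : K) (A B : Polynomial ℂ) (hB : B ≠ 0)
    (hq : q = algebraMap (Polynomial ℂ) K A / algebraMap (Polynomial ℂ) K B)
    (β : ℂ) (hBβ : B.eval β = 0) (hAβ : A.eval β ≠ 0) : IsPole β q := by
  have hBK : algebraMap (Polynomial ℂ) K B ≠ 0 := by
    simpa using (map_ne_zero_iff _ (RatFunc.algebraMap_injective ℂ)).mpr hB
  have hdK : algebraMap (Polynomial ℂ) K q.denom ≠ 0 := by
    simpa using (map_ne_zero_iff _ (RatFunc.algebraMap_injective ℂ)).mpr q.denom_ne_zero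
  have h1 : q * algebraMap (Polynomial ℂ) K B = algebraMap (Polynomial ℂ) K A := by
    rw [hq, div_mul_cancel₀ _ hBK]
  have h2 : algebraMap (Polynomial ℂ) K q.num = q * algebraMap (Polynomial ℂ) K q.denom :=
    (div_eq_iff hdK).mp (q.num_div_denom)
  have key : algebraMap (Polynomial ℂ) K (q.num * B) = algebraMap (Polynomial ℂ) K (A * q.denom) := by
    rw [_root_.map_mul, _root_.map_mul, h2, ← h1]; ring
  have key' : q.num * B = A * q.denom := RatFunc.algebraMap_injective ℂ key
  have := congrArg (Polynomial.eval β) key'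
  simp only [Polynomial.eval_mul, hBβ, mul_zero] at this
  have := this.symm
  rcases mul_eq_zero.mp this with h | h
  · exact absurd h hAβ
  · exact h

open Polynomial in
/-- If `ρ` fixes `X` (and maps constants by `f`), then `ρ` acts on polynomials by mapping
coefficients. -/
lemma mapconj_formula (ρ : K →+* K) (f : ℂ →+* ℂ)
    (hC : ∀ c, ρ (RatFunc.C c) = RatFunc.C (f c)) (hX : ρ RatFunc.X = RatFunc.X)
    (p : Polynomial ℂ) :
    ρ (algebraMap (Polynomial ℂ) K p) = algebraMap (Polynomial ℂ) K (p.map f) := by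
  induction p using Polynomial.induction_on' with
  | add p q hp hq => simp [map_add, hp, hq]
  | monomial n a =>
    simp only [← Polynomial.C_mul_X_pow_eq_monomial, Polynomial.map_mul, Polynomial.map_pow,
      Polynomial.map_C, Polynomial.map_X, _root_.map_mul, map_pow, RatFunc.algebraMap_C,
      RatFunc.algebraMap_X, hC, hX]

open Polynomial in
/-- If `ρ` maps `X` to `X⁻¹` (and constants by `f`), then on polynomials it gives the
reflected polynomial divided by a power of `X`. -/
lemma reflect_formula (ρ : K →+* K) (f : ℂ →+* ℂ)
    (hC : ∀ c, ρ (RatFunc.C c) = RatFunc.C (f c)) (hX : ρ RatFunc.X = RatFunc.X⁻¹)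
    (N : ℕ) (p : Polynomial ℂ) (hp : p.natDegree ≤ N) :
    ρ (algebraMap (Polynomial ℂ) K p) * RatFunc.X ^ N
      = algebraMap (Polynomial ℂ) K (Polynomial.reflect N (p.map f)) := by
  refine Polynomial.induction_with_natDegree_le
    (fun p => ρ (algebraMap (Polynomial ℂ) K p) * RatFunc.X ^ N
      = algebraMap (Polynomial ℂ) K (Polynomial.reflect N (p.map f))) N ?_ ?_ ?_ p hp
  · simp
  · intro n r _ hnN
    have hXpow : (RatFunc.X : K)⁻¹ ^ n * RatFunc.X ^ N = RatFunc.X ^ (N - n) := by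
      have hsplit : (RatFunc.X : K) ^ N = RatFunc.X ^ (N - n) * RatFunc.X ^ n := by
        rw [← pow_add, Nat.sub_add_cancel hnN]
      rw [hsplit, mul_comm (RatFunc.X ^ (N - n)), ← mul_assoc, ← mul_pow,
        inv_mul_cancel₀ (RatFunc.X_ne_zero (K := ℂ)), one_pow, one_mul]
    rw [Polynomial.map_mul, Polynomial.map_pow, Polynomial.map_C, Polynomial.map_X,
      Polynomial.reflect_C_mul_X_pow, Polynomial.revAt_le hnN]
    simp only [_root_.map_mul, map_pow, RatFunc.algebraMap_C, RatFunc.algebraMap_X, hC, hX]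
    rw [mul_assoc, hXpow]
  · intro p q _ _ hp hq
    simp only [Polynomial.map_add, Polynomial.reflect_add, map_add, add_mul, hp, hq]

open Polynomial in
lemma eval_reflect (p : Polynomial ℂ) {N : ℕ} (h : p.natDegree ≤ N) {β : ℂ} (hβ : β ≠ 0) :
    (Polynomial.reflect N p).eval β = p.eval β⁻¹ * β ^ N := by
  have : Invertible (β⁻¹) := invertibleOfNonzero (inv_ne_zero hβ)
  have key := Polynomial.eval₂_reflect_mul_pow (RingHom.id ℂ) β⁻¹ N p h
  rw [invOf_eq_inv, inv_inv] at key
  simp only [Polynomial.eval₂_eq_eval_map, Polynomial.map_id] at key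
  field_simp at key ⊢
  rw [← key, mul_assoc, ← mul_pow, one_div, inv_mul_cancel₀ hβ, one_pow, mul_one]

open Polynomial in
lemma eval_conj_map (p : Polynomial ℂ) (x : ℂ) :
    (p.map (starRingEnd ℂ)).eval x = (starRingEnd ℂ) (p.eval ((starRingEnd ℂ) x)) := by
  induction p using Polynomial.induction_on' with
  | add p q hp hq => simp [hp, hq]
  | monomial n a => simp

open Polynomial in
/-- The scalar core: a proper rational function with poles in the open unit disc whose
`σ`-conjugate is proper with poles in the closed unit disc is constant. -/
lemma scalar_constant (σ : K →+* K)
    (hσC : ∀ c : ℂ, σ (RatFunc.C c) = RatFunc.C ((starRingEnd ℂ) c))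
    (hσX : σ RatFunc.X = RatFunc.X⁻¹)
    (τ : K →+* K)
    (hτC : ∀ c : ℂ, τ (RatFunc.C c) = RatFunc.C c)
    (hτX : τ RatFunc.X = RatFunc.X⁻¹)
    (q : K)
    (h1 : Proper τ q) (h2 : ∀ α, IsPole α q → ‖α‖ < 1)
    (h3 : Proper τ (σ q)) (h4 : ∀ β, IsPole β (σ q) → ‖β‖ ≤ 1) :
    ∃ c : ℂ, q = RatFunc.C c := by
  set n := q.num with hn
  set d := q.denom with hd
  have hd0 : d ≠ 0 := q.denom_ne_zero
  -- coprimality: n and d have no common roots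
  have hnd : ∀ α : ℂ, d.eval α = 0 → n.eval α ≠ 0 := by
    intro α hα hnα
    obtain ⟨a, b, hab⟩ := q.isCoprime_num_denom
    have := congrArg (Polynomial.eval α) hab
    simp [← hn, ← hd, hα, hnα] at this
  -- d has no roots
  have hroots : ∀ α : ℂ, d.eval α ≠ 0 := by
    intro α hα
    have hlt : ‖α‖ < 1 := h2 α hα
    by_cases hα0 : α = 0
    · -- pole of τ (σ q) at 0
      subst hα0
      apply h3
      have hτσC : ∀ c, (τ.comp σ) (RatFunc.C c) = RatFunc.C ((starRingEnd ℂ) c) := by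
        intro c; simp [RingHom.comp_apply, hσC, hτC]
      have hτσX : (τ.comp σ) RatFunc.X = RatFunc.X := by
        simp [RingHom.comp_apply, hσX, map_inv₀, hτX]
      have key : τ (σ q) = algebraMap (Polynomial ℂ) K (n.map (starRingEnd ℂ))
          / algebraMap (Polynomial ℂ) K (d.map (starRingEnd ℂ)) := by
        conv_lhs => rw [← q.num_div_denom]
        rw [map_div₀, map_div₀]
        rw [← RingHom.comp_apply τ σ, ← RingHom.comp_apply τ σ,
          mapconj_formula (τ.comp σ) (starRingEnd ℂ) hτσC hτσX,
          mapconj_formula (τ.comp σ) (starRingEnd ℂ) hτσC hτσX]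
      refine pole_of_div _ _ _ (Polynomial.map_ne_zero hd0) key 0 ?_ ?_
      · rw [eval_conj_map]
        simp [hα]
      · rw [eval_conj_map]
        simp only [map_zero]
        simpa using hnd 0 hα
    · -- pole of σ q at (conj α)⁻¹, which has modulus > 1
      set β : ℂ := ((starRingEnd ℂ) α)⁻¹ with hβdef
      have hβ0 : β ≠ 0 := by
        simp [hβdef, hα0]
      have hβinv : (starRingEnd ℂ) (β⁻¹) = α := by
        simp [hβdef]
      set N : ℕ := max n.natDegree d.natDegree with hN
      have hXN : (RatFunc.X : K) ^ N ≠ 0 := pow_ne_zero _ (RatFunc.X_ne_zero (K := ℂ))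
      have keyσ : σ q = algebraMap (Polynomial ℂ) K (Polynomial.reflect N (n.map (starRingEnd ℂ)))
          / algebraMap (Polynomial ℂ) K (Polynomial.reflect N (d.map (starRingEnd ℂ))) := by
        conv_lhs => rw [← q.num_div_denom]
        rw [map_div₀]
        rw [← reflect_formula σ (starRingEnd ℂ) hσC hσX N n (le_max_left _ _),
          ← reflect_formula σ (starRingEnd ℂ) hσC hσX N d (le_max_right _ _),
          mul_div_mul_right _ _ hXN]
      have hndeg : (n.map (starRingEnd ℂ)).natDegree ≤ N :=
        le_trans Polynomial.natDegree_map_le (le_max_left _ _)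
      have hddeg : (d.map (starRingEnd ℂ)).natDegree ≤ N :=
        le_trans Polynomial.natDegree_map_le (le_max_right _ _)
      have hB0 : Polynomial.reflect N (d.map (starRingEnd ℂ)) ≠ 0 := by
        rw [Ne, Polynomial.reflect_eq_zero_iff]
        exact Polynomial.map_ne_zero hd0
      have hpole : IsPole β (σ q) := by
        refine pole_of_div _ _ _ hB0 keyσ β ?_ ?_
        · rw [eval_reflect _ hddeg hβ0, eval_conj_map, hβinv, hα]
          simp
        · rw [eval_reflect _ hndeg hβ0, eval_conj_map, hβinv]
          exact mul_ne_zero (by simpa using hnd α hα) (pow_ne_zero _ hβ0)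
      have hle := h4 β hpole
      have habs : ‖β‖ = ‖α‖⁻¹ := by
        rw [hβdef, norm_inv, Complex.norm_conj]
      have hαpos : 0 < ‖α‖ := by
        simpa using hα0
      have : (1 : ℝ) < ‖β‖ := by
        rw [habs]
        exact (one_lt_inv₀ hαpos).mpr hlt
      linarith
  -- hence d = 1
  have hd1 : d = 1 := by
    have hdeg : d.natDegree = 0 := by
      by_contra hdeg
      have : 0 < d.degree := Polynomial.natDegree_pos_iff_degree_pos.mp (Nat.pos_of_ne_zero hdeg)
      obtain ⟨z, hz⟩ := Complex.exists_root this
      exact hroots z hz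
    have := Polynomial.eq_C_of_natDegree_eq_zero hdeg
    rw [this]
    have hm : d.Monic := q.monic_denom
    have : d.coeff 0 = 1 := by
      have := hm.leadingCoeff
      rwa [Polynomial.leadingCoeff, hdeg] at this
    rw [this, Polynomial.C_1]
  have hq : q = algebraMap (Polynomial ℂ) K n := by
    conv_lhs => rw [← q.num_div_denom]
    rw [← hd, hd1]
    simp
    exact hn.symm
  -- now properness forces n to be constant
  have hn0 : n.natDegree = 0 := by
    by_contra h
    apply h1
    have hnne : n ≠ 0 := fun h0 => h (by rw [h0]; simp)
    have key0 := reflect_formula τ (RingHom.id ℂ) (by simpa using hτC) hτX n.natDegree n le_rfl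
    rw [Polynomial.map_id] at key0
    have key : τ q = algebraMap (Polynomial ℂ) K (Polynomial.reflect n.natDegree n)
        / algebraMap (Polynomial ℂ) K (Polynomial.X ^ n.natDegree) := by
      rw [map_pow, RatFunc.algebraMap_X, eq_div_iff (pow_ne_zero _ (RatFunc.X_ne_zero (K := ℂ))),
        hq, key0]
    refine pole_of_div _ _ _ (pow_ne_zero _ Polynomial.X_ne_zero) key 0 ?_ ?_
    · simp [zero_pow h]
    · rw [← Polynomial.coeff_zero_eq_eval_zero, Polynomial.coeff_reflect]
      simpa [Polynomial.revAt_le (Nat.zero_le _)] using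
        Polynomial.leadingCoeff_ne_zero.mpr hnne
  refine ⟨n.coeff 0, ?_⟩
  rw [hq]
  conv_lhs => rw [Polynomial.eq_C_of_natDegree_eq_zero hn0]
  rw [RatFunc.algebraMap_C]

theorem inner_minimum_phase_is_constant_unitary (m : ℕ)
    (σ : K →+* K)
    (hσC : ∀ c : ℂ, σ (RatFunc.C c) = RatFunc.C ((starRingEnd ℂ) c))
    (hσX : σ RatFunc.X = RatFunc.X⁻¹)
    (τ : K →+* K)
    (hτC : ∀ c : ℂ, τ (RatFunc.C c) = RatFunc.C c)
    (hτX : τ RatFunc.X = RatFunc.X⁻¹)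
    (Q : Matrix (Fin m) (Fin m) K)
    (hinner : Q * paraStar σ Q = 1)
    (hQprop : ∀ i j, Proper τ (Q i j))
    (hQpole : ∀ α : ℂ, MIsPole α Q → ‖α‖ < 1)
    (hQinvprop : ∀ i j, Proper τ (Q⁻¹ i j))
    (hQinvpole : ∀ α : ℂ, MIsPole α Q⁻¹ → ‖α‖ ≤ 1) :
    ∃ U : Matrix (Fin m) (Fin m) ℂ,
      Uᴴ * U = 1 ∧ U * Uᴴ = 1 ∧ Q = U.map (fun c : ℂ => (RatFunc.C c : K)) := by
  have hinv : Q⁻¹ = paraStar σ Q := Matrix.inv_eq_right_inv hinner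
  have hps : ∀ i j, Q⁻¹ j i = σ (Q i j) := by
    intro i j
    rw [hinv]
    rfl
  have hentry : ∀ i j, ∃ c : ℂ, Q i j = RatFunc.C c := by
    intro i j
    refine scalar_constant σ hσC hσX τ hτC hτX (Q i j) (hQprop i j)
      (fun α h => hQpole α ⟨i, j, h⟩) ?_ ?_
    · have := hQinvprop j i
      rwa [hps i j] at this
    · intro β hβ
      exact hQinvpole β ⟨j, i, by rwa [hps i j]⟩
  choose U0 hU using hentry
  set U : Matrix (Fin m) (Fin m) ℂ := Matrix.of U0 with hUdef
  have hQU : Q = U.map (fun c : ℂ => (RatFunc.C c : K)) := by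
    ext i j
    simp only [Matrix.map_apply, hU]
    rfl
  have hstar : paraStar σ Q = Uᴴ.map (fun c : ℂ => (RatFunc.C c : K)) := by
    ext j i
    simp only [paraStar, Matrix.transpose_apply, Matrix.map_apply, Matrix.conjTranspose_apply]
    rw [hU, hσC]
    rfl
  have hCinj : Function.Injective (fun c : ℂ => (RatFunc.C c : K)) :=
    fun a b h => (RatFunc.C : ℂ →+* K).injective h
  have hmul : U * Uᴴ = 1 := by
    apply Matrix.map_injective hCinj
    show ((U * Uᴴ).map fun c : ℂ => (RatFunc.C c : K)) = (1 : Matrix (Fin m) (Fin m) ℂ).map fun c : ℂ => (RatFunc.C c : K)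
    have : (U * Uᴴ).map (fun c : ℂ => (RatFunc.C c : K))
        = U.map (fun c : ℂ => (RatFunc.C c : K)) * Uᴴ.map (fun c : ℂ => (RatFunc.C c : K)) :=
      Matrix.map_mul (f := (RatFunc.C : ℂ →+* K))
    rw [this, ← hQU, ← hstar, hinner, Matrix.map_one _ (map_zero _) (map_one _)]
  exact ⟨U, mul_eq_one_comm.mp hmul, hmul, hQU⟩
end
end

section
/- Let Q be an m×m matrix over K = RatFunc ℂ with Q Q* = 1, every entry of Q proper, and every pole α of Q satisfying |α| < 1 (Q is a stable inner matrix). If Q is not a constant matrix (i.e. not of the form RatFunc.C applied entrywise to a complex matrix), then Q has a non-minimum-phase zero: either there exist α ∈ ℂ with |α| > 1 and a nonzero vector v ∈ ℂᵐ such that Q(α) v = 0, or the value matrix Q(∞) has rank strictly less than m. (A nonconstant stable inner rational matrix has a zero outside the closed unit disc or at infinity.) -/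
open Matrix

noncomputable section

/-- Evaluation of a rational function at a point. -/
def evalAt (α : ℂ) (q : K) : ℂ := RatFunc.eval (RingHom.id ℂ) α q

/-- Entrywise evaluation of a matrix of rational functions. -/
def MEval {I J : Type} (α : ℂ) (W : Matrix I J K) : Matrix I J ℂ := W.map (evalAt α)

open Polynomial in
lemma myAlg (p : Polynomial ℂ) :
    algebraMap (Polynomial ℂ) K p = p.eval₂ RatFunc.C RatFunc.X := by
  have h : (algebraMap (Polynomial ℂ) K) = Polynomial.eval₂RingHom RatFunc.C RatFunc.X :=
    Polynomial.ringHom_ext (fun a => by simp [RatFunc.algebraMap_C])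
      (by simp [RatFunc.algebraMap_X])
  rw [h]; rfl

open Polynomial RatFunc in
lemma myCross (A B : Polynomial ℂ) (hB : B ≠ 0) (r : K)
    (hr : r = algebraMap (Polynomial ℂ) K A / algebraMap (Polynomial ℂ) K B) :
    r.num * B = A * r.denom := by
  apply RatFunc.algebraMap_injective ℂ
  rw [_root_.map_mul, _root_.map_mul]
  have h1 : algebraMap (Polynomial ℂ) K r.num / algebraMap (Polynomial ℂ) K r.denom
      = algebraMap (Polynomial ℂ) K A / algebraMap (Polynomial ℂ) K B := by
    rw [num_div_denom, hr]
  rw [div_eq_div_iff (algebraMap_ne_zero (denom_ne_zero r)) (algebraMap_ne_zero hB)] at h1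
  exact h1

open Polynomial in
lemma myIsPole_of (A B : Polynomial ℂ) (hB : B ≠ 0) (r : K)
    (hr : r = algebraMap (Polynomial ℂ) K A / algebraMap (Polynomial ℂ) K B)
    (β : ℂ) (h0 : B.eval β = 0) (h1 : A.eval β ≠ 0) : IsPole β r := by
  have h := congrArg (Polynomial.eval β) (myCross A B hB r hr)
  simp only [Polynomial.eval_mul, h0, mul_zero] at h
  rcases mul_eq_zero.mp h.symm with h2 | h2
  · exact absurd h2 h1
  · exact h2

open Polynomial RatFunc in
lemma myNoPole_of (A B : Polynomial ℂ) (hB : B ≠ 0) (r : K)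
    (hr : r = algebraMap (Polynomial ℂ) K A / algebraMap (Polynomial ℂ) K B)
    (β : ℂ) (h0 : B.eval β ≠ 0) : ¬ IsPole β r := by
  intro hp
  have hp' : r.denom.eval β = 0 := hp
  have h := congrArg (Polynomial.eval β) (myCross A B hB r hr)
  simp only [Polynomial.eval_mul, hp', mul_zero] at h
  have hnum : r.num.eval β = 0 := by
    rcases mul_eq_zero.mp h with h2 | h2
    · exact h2
    · exact absurd h2 h0
  obtain ⟨a, b, hab⟩ := RatFunc.isCoprime_num_denom r
  have := congrArg (Polynomial.eval β) hab
  simp [hnum, hp'] at this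

open Polynomial RatFunc in
/-- The subring of rational functions with no pole at `β`. -/
def good (β : ℂ) : Subring K where
  carrier := {q | (RatFunc.denom q).eval β ≠ 0}
  one_mem' := by simp [RatFunc.denom_one]
  zero_mem' := by simp [RatFunc.denom_zero]
  mul_mem' := by
    intro a b ha hb h
    have := Polynomial.eval_eq_zero_of_dvd_of_eval_eq_zero (RatFunc.denom_mul_dvd a b) h
    rw [Polynomial.eval_mul] at this
    rcases mul_eq_zero.mp this with h2 | h2
    · exact ha h2
    · exact hb h2
  add_mem' := by
    intro a b ha hb h
    have := Polynomial.eval_eq_zero_of_dvd_of_eval_eq_zero (RatFunc.denom_add_dvd a b) h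
    rw [Polynomial.eval_mul] at this
    rcases mul_eq_zero.mp this with h2 | h2
    · exact ha h2
    · exact hb h2
  neg_mem' := by
    intro a ha h
    have hd : RatFunc.denom (a * (-1 : K)) ∣ RatFunc.denom a * RatFunc.denom (-1 : K) :=
      RatFunc.denom_mul_dvd a (-1)
    have hm1 : ((-1 : K)) = algebraMap (Polynomial ℂ) K (-1) := by simp
    have hden1 : RatFunc.denom (-1 : K) = 1 := by rw [hm1, RatFunc.denom_algebraMap]
    rw [mul_neg_one, hden1, mul_one] at hd
    have := Polynomial.eval_eq_zero_of_dvd_of_eval_eq_zero hd h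
    exact ha this

lemma mem_good {β : ℂ} {q : K} : q ∈ good β ↔ (RatFunc.denom q).eval β ≠ 0 := Iff.rfl

lemma myEval₂Id (p : Polynomial ℂ) (x : ℂ) : p.eval₂ (RingHom.id ℂ) x = p.eval x := rfl

/-- Evaluation at `β` as a ring hom on `good β`. -/
def evalHom (β : ℂ) : good β →+* ℂ where
  toFun q := evalAt β q.1
  map_one' := by simp [evalAt]
  map_zero' := by simp [evalAt]
  map_mul' a b := by
    have ha : Polynomial.eval₂ (RingHom.id ℂ) β (RatFunc.denom a.1) ≠ 0 := a.2
    have hb : Polynomial.eval₂ (RingHom.id ℂ) β (RatFunc.denom b.1) ≠ 0 := b.2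
    exact RatFunc.eval_mul (f := RingHom.id ℂ) (a := β) ha hb
  map_add' a b := by
    have ha : Polynomial.eval₂ (RingHom.id ℂ) β (RatFunc.denom a.1) ≠ 0 := a.2
    have hb : Polynomial.eval₂ (RingHom.id ℂ) β (RatFunc.denom b.1) ≠ 0 := b.2
    exact RatFunc.eval_add (f := RingHom.id ℂ) (a := β) ha hb

lemma myDetEval {m : ℕ} (β : ℂ) (A : Matrix (Fin m) (Fin m) K)
    (hA : ∀ i j, (RatFunc.denom (A i j)).eval β ≠ 0) :
    (RatFunc.denom A.det).eval β ≠ 0 ∧ (MEval β A).det = evalAt β A.det ∧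
      (∀ i j, (RatFunc.denom (A.adjugate i j)).eval β ≠ 0) := by
  classical
  set A' : Matrix (Fin m) (Fin m) (good β) := fun i j => ⟨A i j, hA i j⟩ with hA'
  have h1 : A = ((good β).subtype).mapMatrix A' := by ext i j; rfl
  have hdet : A.det = ((good β).subtype) A'.det := by
    rw [h1, ← RingHom.map_det]
  have hdetmem : A.det ∈ good β := by rw [hdet]; exact A'.det.2
  refine ⟨hdetmem, ?_, ?_⟩
  · have h2 : MEval β A = (evalHom β).mapMatrix A' := by ext i j; rfl
    rw [h2, ← RingHom.map_det]
    show evalAt β (A'.det).1 = evalAt β A.det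
    rw [hdet]; rfl
  · intro i j
    have h3 : A.adjugate = ((good β).subtype).mapMatrix (A'.adjugate) := by
      rw [h1, RingHom.map_adjugate]
    have h4 : A.adjugate i j = ((A'.adjugate) i j).1 := by rw [h3]; rfl
    rw [h4]; exact ((A'.adjugate) i j).2

open Polynomial RatFunc in
lemma myMain {m : ℕ} (β : ℂ) (A B : Matrix (Fin m) (Fin m) K) (hAB : A * B = 1)
    (hA : ∀ i j, ¬ IsPole β (A i j)) (hB : ∃ i j, IsPole β (B i j)) :
    (MEval β A).det = 0 := by
  classical
  by_contra hne
  obtain ⟨hdetmem, hdeteq, hadj⟩ := myDetEval β A (fun i j => hA i j)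
  have hEv : evalAt β A.det ≠ 0 := by rw [← hdeteq]; exact hne
  have hnum : (RatFunc.num A.det).eval β ≠ 0 := by
    intro h
    apply hEv
    show RatFunc.eval (RingHom.id ℂ) β A.det = 0
    rw [RatFunc.eval, myEval₂Id, h, zero_div]
  have hd0 : A.det ≠ 0 := by
    intro h; apply hnum; rw [h]; simp
  have hBA : B = A⁻¹ := (Matrix.inv_eq_right_inv hAB).symm
  obtain ⟨i, j, hpole⟩ := hB
  have hadjne : RatFunc.num A.det * RatFunc.denom (A.adjugate i j) ≠ 0 :=
    mul_ne_zero (num_ne_zero hd0) (denom_ne_zero _)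
  have key : B i j = algebraMap (Polynomial ℂ) K
        (RatFunc.denom A.det * RatFunc.num (A.adjugate i j)) /
      algebraMap (Polynomial ℂ) K
        (RatFunc.num A.det * RatFunc.denom (A.adjugate i j)) := by
    rw [hBA, Matrix.inv_def, Ring.inverse_eq_inv']
    show A.det⁻¹ * A.adjugate i j = _
    have e2 := (div_eq_iff (algebraMap_ne_zero (denom_ne_zero A.det))).mp (num_div_denom A.det)
    have e3 := (div_eq_iff (algebraMap_ne_zero (denom_ne_zero (A.adjugate i j)))).mp
      (num_div_denom (A.adjugate i j))
    rw [_root_.map_mul, _root_.map_mul, eq_div_iff (by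
      exact mul_ne_zero (algebraMap_ne_zero (num_ne_zero hd0))
        (algebraMap_ne_zero (denom_ne_zero _)))]
    rw [e2, e3]
    field_simp
  have hevalne : (RatFunc.num A.det * RatFunc.denom (A.adjugate i j)).eval β ≠ 0 := by
    rw [Polynomial.eval_mul]; exact mul_ne_zero hnum (hadj i j)
  exact myNoPole_of _ _ hadjne (B i j) key β hevalne hpole

open Polynomial in
lemma myRev (p : Polynomial ℂ) :
    p.eval₂ RatFunc.C (RatFunc.X⁻¹ : K) * RatFunc.X ^ p.natDegree
      = algebraMap (Polynomial ℂ) K p.reverse := by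
  have hX : (RatFunc.X : K) ≠ 0 := RatFunc.X_ne_zero
  have : Invertible (RatFunc.X⁻¹ : K) := invertibleOfNonzero (inv_ne_zero hX)
  have h := Polynomial.eval₂_reflect_mul_pow RatFunc.C (RatFunc.X⁻¹ : K) p.natDegree p le_rfl
  rw [invOf_eq_inv, inv_inv] at h
  have hrev : Polynomial.reflect p.natDegree p = p.reverse := rfl
  rw [hrev, ← myAlg] at h
  rw [← h, mul_assoc, inv_pow, inv_mul_cancel₀ (pow_ne_zero _ hX), mul_one]

open Polynomial in
lemma myRevEval (p : Polynomial ℂ) (x : ℂ) (hx : x ≠ 0) :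
    p.reverse.eval x⁻¹ * x ^ p.natDegree = p.eval x := by
  have : Invertible x := invertibleOfNonzero hx
  have h := Polynomial.eval₂_reflect_mul_pow (RingHom.id ℂ) x p.natDegree p le_rfl
  rw [invOf_eq_inv, myEval₂Id, myEval₂Id] at h
  exact h

open Polynomial in
lemma myTauAlg (τ : K →+* K) (hτC : ∀ c : ℂ, τ (RatFunc.C c) = RatFunc.C c)
    (hτX : τ RatFunc.X = RatFunc.X⁻¹) (p : Polynomial ℂ) :
    τ (algebraMap (Polynomial ℂ) K p) = p.eval₂ RatFunc.C (RatFunc.X⁻¹ : K) := by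
  rw [myAlg, Polynomial.hom_eval₂, hτX]
  congr 1
  exact RingHom.ext hτC

open Polynomial in
lemma mySigmaAlg (σ : K →+* K)
    (hσC : ∀ c : ℂ, σ (RatFunc.C c) = RatFunc.C ((starRingEnd ℂ) c))
    (hσX : σ RatFunc.X = RatFunc.X⁻¹) (p : Polynomial ℂ) :
    σ (algebraMap (Polynomial ℂ) K p)
      = (p.map (starRingEnd ℂ)).eval₂ RatFunc.C (RatFunc.X⁻¹ : K) := by
  rw [myAlg, Polynomial.hom_eval₂, hσX, Polynomial.eval₂_map]
  congr 1
  exact RingHom.ext hσC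

open Polynomial RatFunc in
lemma myNumDenomEval (q : K) {α : ℂ} (h : IsPole α q) :
    q.denom.eval α = 0 ∧ q.num.eval α ≠ 0 ∧ q.num ≠ 0 := by
  have hd : q.denom.eval α = 0 := h
  have hn : q.num.eval α ≠ 0 := by
    intro h0
    obtain ⟨a, b, hab⟩ := RatFunc.isCoprime_num_denom q
    have := congrArg (Polynomial.eval α) hab
    simp [h0, hd] at this
  exact ⟨hd, hn, fun h0 => hn (by simp [h0])⟩

open Polynomial RatFunc in
lemma myPoleσ (σ : K →+* K)
    (hσC : ∀ c : ℂ, σ (RatFunc.C c) = RatFunc.C ((starRingEnd ℂ) c))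
    (hσX : σ RatFunc.X = RatFunc.X⁻¹) (q : K) (α : ℂ) (hα0 : α ≠ 0)
    (h : IsPole α q) : IsPole (((starRingEnd ℂ) α)⁻¹) (σ q) := by
  obtain ⟨hd, hn, hnne⟩ := myNumDenomEval q h
  have hdne : q.denom ≠ 0 := RatFunc.denom_ne_zero q
  set cα : ℂ := (starRingEnd ℂ) α with hcα
  have hcα0 : cα ≠ 0 := by simpa [hcα] using hα0
  set nn : Polynomial ℂ := q.num.map (starRingEnd ℂ) with hnn
  set dd : Polynomial ℂ := q.denom.map (starRingEnd ℂ) with hdd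
  have hnnne : nn ≠ 0 := Polynomial.map_ne_zero hnne
  have hddne : dd ≠ 0 := Polynomial.map_ne_zero hdne
  have hX : (RatFunc.X : K) ≠ 0 := RatFunc.X_ne_zero
  have hEnn := myRev nn
  have hEdd := myRev dd
  have hEddne : dd.eval₂ RatFunc.C (RatFunc.X⁻¹ : K) ≠ 0 := by
    intro h0
    apply algebraMap_ne_zero (K := ℂ)
      ((Polynomial.reverse_eq_zero (f := dd)).ne.mpr hddne)
    rw [← hEdd, h0, zero_mul]
  have key : σ q = algebraMap (Polynomial ℂ) K (nn.reverse * Polynomial.X ^ dd.natDegree) /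
      algebraMap (Polynomial ℂ) K (dd.reverse * Polynomial.X ^ nn.natDegree) := by
    have hq : q = algebraMap (Polynomial ℂ) K q.num / algebraMap (Polynomial ℂ) K q.denom :=
      (RatFunc.num_div_denom q).symm
    rw [hq, map_div₀, mySigmaAlg σ hσC hσX, mySigmaAlg σ hσC hσX]
    rw [_root_.map_mul, _root_.map_mul, _root_.map_pow, _root_.map_pow, RatFunc.algebraMap_X, ← hnn, ← hdd,
      ← hEnn, ← hEdd]
    rw [div_eq_div_iff hEddne (by
      exact mul_ne_zero (mul_ne_zero hEddne (pow_ne_zero _ hX)) (pow_ne_zero _ hX))]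
    ring
  have hBne : dd.reverse * Polynomial.X ^ nn.natDegree ≠ 0 :=
    mul_ne_zero ((Polynomial.reverse_eq_zero (f := dd)).ne.mpr hddne)
      (pow_ne_zero _ Polynomial.X_ne_zero)
  apply myIsPole_of _ _ hBne (σ q) key
  · -- B eval = 0
    have hddα : dd.eval cα = 0 := by
      have : dd.eval cα = (starRingEnd ℂ) (q.denom.eval α) := by
        rw [hdd, Polynomial.eval_map, Polynomial.eval₂_at_apply]
      rw [this, hd, map_zero]
    have hrev : dd.reverse.eval cα⁻¹ = 0 := by
      have h5 := myRevEval dd cα hcα0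
      rw [hddα] at h5
      exact (mul_eq_zero.mp h5).resolve_right (pow_ne_zero _ hcα0)
    rw [Polynomial.eval_mul, hrev, zero_mul]
  · -- A eval ≠ 0
    rw [Polynomial.eval_mul]
    apply mul_ne_zero
    · intro h0
      have h5 := myRevEval nn cα hcα0
      rw [h0, zero_mul] at h5
      have : nn.eval cα = (starRingEnd ℂ) (q.num.eval α) := by
        rw [hnn, Polynomial.eval_map, Polynomial.eval₂_at_apply]
      rw [this] at h5
      exact hn (by simpa using h5.symm)
    · simp only [Polynomial.eval_pow, Polynomial.eval_X]
      exact pow_ne_zero _ (inv_ne_zero hcα0)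

open Polynomial RatFunc in
lemma myPoleInf (σ : K →+* K)
    (hσC : ∀ c : ℂ, σ (RatFunc.C c) = RatFunc.C ((starRingEnd ℂ) c))
    (hσX : σ RatFunc.X = RatFunc.X⁻¹)
    (τ : K →+* K) (hτC : ∀ c : ℂ, τ (RatFunc.C c) = RatFunc.C c)
    (hτX : τ RatFunc.X = RatFunc.X⁻¹) (q : K)
    (h : IsPole 0 q) : IsPole 0 (τ (σ q)) := by
  obtain ⟨hd, hn, hnne⟩ := myNumDenomEval q h
  have hdne : q.denom ≠ 0 := RatFunc.denom_ne_zero q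
  have hτσ : ∀ p : Polynomial ℂ, τ (σ (algebraMap (Polynomial ℂ) K p))
      = algebraMap (Polynomial ℂ) K (p.map (starRingEnd ℂ)) := by
    intro p
    rw [mySigmaAlg σ hσC hσX, Polynomial.hom_eval₂]
    have hτX' : τ (RatFunc.X⁻¹ : K) = RatFunc.X := by
      rw [map_inv₀, hτX, inv_inv]
    rw [hτX', myAlg]
    congr 1
    exact RingHom.ext hτC
  have key : τ (σ q) = algebraMap (Polynomial ℂ) K (q.num.map (starRingEnd ℂ)) /
      algebraMap (Polynomial ℂ) K (q.denom.map (starRingEnd ℂ)) := by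
    have hq : q = algebraMap (Polynomial ℂ) K q.num / algebraMap (Polynomial ℂ) K q.denom :=
      (RatFunc.num_div_denom q).symm
    conv_lhs => rw [hq]
    rw [map_div₀, map_div₀, hτσ, hτσ]
  apply myIsPole_of _ _ (Polynomial.map_ne_zero hdne) _ key
  · have : (q.denom.map (starRingEnd ℂ)).eval 0 = (starRingEnd ℂ) (q.denom.eval 0) := by
      rw [Polynomial.eval_map, show (0:ℂ) = (starRingEnd ℂ) 0 by simp,
        Polynomial.eval₂_at_apply]
      simp
    rw [this, hd, map_zero]
  · intro h0
    have : (q.num.map (starRingEnd ℂ)).eval 0 = (starRingEnd ℂ) (q.num.eval 0) := by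
      rw [Polynomial.eval_map, show (0:ℂ) = (starRingEnd ℂ) 0 by simp,
        Polynomial.eval₂_at_apply]
      simp
    rw [this] at h0
    exact hn (by simpa using h0)

open Polynomial RatFunc in
lemma myExistsPole (τ : K →+* K) (hτC : ∀ c : ℂ, τ (RatFunc.C c) = RatFunc.C c)
    (hτX : τ RatFunc.X = RatFunc.X⁻¹) (q : K)
    (hq : ¬ IsPole 0 (τ q)) (hnc : ∀ c : ℂ, q ≠ RatFunc.C c) :
    ∃ α : ℂ, IsPole α q := by
  by_contra h
  push_neg at h
  have hden : q.denom = 1 := by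
    by_contra hne1
    have hnd : q.denom.natDegree ≠ 0 := fun h0 =>
      hne1 ((Polynomial.Monic.natDegree_eq_zero (RatFunc.monic_denom q)).mp h0)
    have hdeg : q.denom.degree ≠ 0 := by
      rw [Polynomial.degree_eq_natDegree (RatFunc.denom_ne_zero q)]
      exact_mod_cast hnd
    obtain ⟨x, hx⟩ := IsAlgClosed.exists_root _ hdeg
    exact h x hx
  have hqalg : q = algebraMap (Polynomial ℂ) K q.num := by
    conv_lhs => rw [← RatFunc.num_div_denom q]
    rw [hden, _root_.map_one, div_one]
  rcases Nat.eq_zero_or_pos q.num.natDegree with h0 | hpos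
  · have hc := Polynomial.eq_C_of_natDegree_eq_zero h0
    have hq2 : q = RatFunc.C (q.num.coeff 0) := by
      conv_lhs => rw [hqalg, hc]
      exact RatFunc.algebraMap_C _
    exact hnc _ hq2
  · apply hq
    have hnum0 : q.num ≠ 0 := fun h0 => by simp [h0] at hpos
    have hτq : τ q = algebraMap (Polynomial ℂ) K q.num.reverse /
        algebraMap (Polynomial ℂ) K (Polynomial.X ^ q.num.natDegree) := by
      conv_lhs => rw [hqalg]
      rw [myTauAlg τ hτC hτX]
      rw [eq_div_iff (algebraMap_ne_zero (pow_ne_zero _ Polynomial.X_ne_zero))]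
      rw [_root_.map_pow, RatFunc.algebraMap_X]
      exact myRev q.num
    apply myIsPole_of _ _ (pow_ne_zero _ Polynomial.X_ne_zero) _ hτq
    · simp only [Polynomial.eval_pow, Polynomial.eval_X]
      exact zero_pow hpos.ne'
    · rw [← Polynomial.coeff_zero_eq_eval_zero, Polynomial.coeff_zero_reverse]
      exact Polynomial.leadingCoeff_ne_zero.mpr hnum0

lemma myRankLt {m : ℕ} (M : Matrix (Fin m) (Fin m) ℂ) (h : M.det = 0) : M.rank < m := by
  classical
  obtain ⟨v, hv, hMv⟩ := Matrix.exists_mulVec_eq_zero_iff.mpr h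
  have hker : 0 < Module.finrank ℂ (LinearMap.ker M.mulVecLin) := by
    rw [Module.finrank_pos_iff]
    refine ⟨⟨v, by rw [LinearMap.mem_ker, Matrix.mulVecLin_apply]; exact hMv⟩, 0, ?_⟩
    simp only [ne_eq, Submodule.mk_eq_zero]
    exact hv
  have hrn := LinearMap.finrank_range_add_finrank_ker M.mulVecLin
  have hpi : Module.finrank ℂ (Fin m → ℂ) = m := by
    rw [Module.finrank_pi]; exact Fintype.card_fin m
  rw [hpi] at hrn
  have : M.rank = Module.finrank ℂ (LinearMap.range M.mulVecLin) := rfl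
  omega

theorem nonconstant_stable_inner_has_unstable_zero (m : ℕ)
    (σ : K →+* K)
    (hσC : ∀ c : ℂ, σ (RatFunc.C c) = RatFunc.C ((starRingEnd ℂ) c))
    (hσX : σ RatFunc.X = RatFunc.X⁻¹)
    (τ : K →+* K)
    (hτC : ∀ c : ℂ, τ (RatFunc.C c) = RatFunc.C c)
    (hτX : τ RatFunc.X = RatFunc.X⁻¹)
    (Q : Matrix (Fin m) (Fin m) K)
    (hinner : Q * paraStar σ Q = 1)
    (hQprop : ∀ i j, Proper τ (Q i j))
    (hQpole : ∀ α : ℂ, MIsPole α Q → ‖α‖ < 1)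
    (hnonconst : ¬ ∃ U : Matrix (Fin m) (Fin m) ℂ,
      Q = U.map (fun c : ℂ => (RatFunc.C c : K))) :
    (∃ α : ℂ, 1 < ‖α‖ ∧
      ∃ v : Fin m → ℂ, v ≠ 0 ∧ (MEval α Q).mulVec v = 0) ∨
    (MEval 0 (Q.map τ)).rank < m := by
  classical
  have hent : ∃ i j, ∀ c : ℂ, Q i j ≠ RatFunc.C c := by
    by_contra h
    push_neg at h
    choose U hU using h
    exact hnonconst ⟨U, by ext i j; rw [hU]; rfl⟩
  obtain ⟨i, j, hij⟩ := hent
  obtain ⟨α, hα⟩ := myExistsPole τ hτC hτX (Q i j) (hQprop i j) hij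
  have hαlt : ‖α‖ < 1 := hQpole α ⟨i, j, hα⟩
  by_cases hα0 : α = 0
  · right
    subst hα0
    have hAB : Q.map τ * (paraStar σ Q).map τ = 1 := by
      have := congrArg (τ.mapMatrix (m := Fin m)) hinner
      simpa using this
    have hApole : ∀ i' j', ¬ IsPole 0 ((Q.map τ) i' j') := fun i' j' => hQprop i' j'
    have hBpole : IsPole 0 (((paraStar σ Q).map τ) j i) := by
      show IsPole 0 (τ (σ (Q i j)))
      exact myPoleInf σ hσC hσX τ hτC hτX (Q i j) hα
    exact myRankLt _ (myMain 0 (Q.map τ) ((paraStar σ Q).map τ) hAB hApole ⟨j, i, hBpole⟩)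
  · left
    set β : ℂ := ((starRingEnd ℂ) α)⁻¹ with hβ
    have habs : ‖β‖ = ‖α‖⁻¹ := by
      rw [hβ, norm_inv, Complex.norm_conj]
    have hαpos : 0 < ‖α‖ := by
      simpa using hα0
    have hβabs : 1 < ‖β‖ := by
      rw [habs]
      exact (one_lt_inv₀ hαpos).mpr hαlt
    refine ⟨β, hβabs, ?_⟩
    have hApole : ∀ i' j', ¬ IsPole β (Q i' j') := by
      intro i' j' hp
      exact absurd (hQpole β ⟨i', j', hp⟩) (not_lt.mpr (le_of_lt hβabs))
    have hBpole : IsPole β (paraStar σ Q j i) := by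
      show IsPole β (σ (Q i j))
      exact myPoleσ σ hσC hσX (Q i j) α hα0 hα
    exact Matrix.exists_mulVec_eq_zero_iff.mpr
      (myMain β Q (paraStar σ Q) hinner hApole ⟨j, i, hBpole⟩)
end
end

section
/- Let W be an (m+p)×m minimum-phase matrix over K = RatFunc ℂ of full column rank m (as a matrix over the field K), and let Q be an m×m matrix over K with Q Q* = 1, every entry of Q proper, and every pole α of Q satisfying |α| < 1. If the product W Q is also minimum-phase, then Q is a constant unitary matrix: Q = RatFunc.C applied entrywise to some unitary U ∈ M_m(ℂ). (Uniqueness part of the paper's Lemma 2.3: a full-column-rank minimum-phase spectral factor is unique up to right multiplication by a constant unitary matrix.) -/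
open Matrix

noncomputable section

/-- Discrete-time minimum phase: entries proper, all poles strictly inside the unit
circle, full column rank at every point outside the closed unit disc and at infinity. -/
def MinPhaseD (τ : K →+* K) {n m : Type} [Fintype n] [Fintype m]
    (W : Matrix n m K) : Prop :=
  (∀ i j, Proper τ (W i j)) ∧
  (∀ α : ℂ, MIsPole α W → ‖α‖ < 1) ∧
  (∀ α : ℂ, 1 < ‖α‖ → (MEval α W).rank = Fintype.card m) ∧
  (MEval 0 (W.map τ)).rank = Fintype.card m

namespace MinPhaseAux

open Polynomial

lemma eval2_id (p : Polynomial ℂ) (a : ℂ) :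
    Polynomial.eval₂ (RingHom.id ℂ) a p = p.eval a := by
  rw [Polynomial.eval₂_eq_eval_map, Polynomial.map_id]

lemma eval_zero_of_dvd {p q : Polynomial ℂ} (h : p ∣ q) {a : ℂ}
    (hp : p.eval a = 0) : q.eval a = 0 := by
  obtain ⟨c, rfl⟩ := h
  simp [hp]

/-- The subring of rational functions with no pole at `ζ`. -/
def polesub (ζ : ℂ) : Subring K where
  carrier := {q : K | (RatFunc.denom q).eval ζ ≠ 0}
  mul_mem' := by
    intro a b ha hb hab
    have h0 := eval_zero_of_dvd (RatFunc.denom_mul_dvd a b) hab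
    rw [Polynomial.eval_mul] at h0
    rcases mul_eq_zero.mp h0 with h | h
    exacts [ha h, hb h]
  add_mem' := by
    intro a b ha hb hab
    have h0 := eval_zero_of_dvd (RatFunc.denom_add_dvd a b) hab
    rw [Polynomial.eval_mul] at h0
    rcases mul_eq_zero.mp h0 with h | h
    exacts [ha h, hb h]
  one_mem' := by simp [Set.mem_setOf_eq, RatFunc.denom_one]
  zero_mem' := by simp [Set.mem_setOf_eq, RatFunc.denom_zero]
  neg_mem' := by
    intro a ha hna
    have : RatFunc.denom (-a) ∣ RatFunc.denom (-1 : K) * RatFunc.denom a := by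
      simpa [neg_one_mul] using RatFunc.denom_mul_dvd (-1 : K) a
    have h1 : RatFunc.denom (-1 : K) = 1 := by
      have he : (-1 : K) = algebraMap (Polynomial ℂ) K (-1) := by simp
      rw [he, RatFunc.denom_algebraMap]
    rw [h1, one_mul] at this
    exact ha (eval_zero_of_dvd this hna)

lemma mem_polesub_iff {ζ : ℂ} {q : K} : q ∈ polesub ζ ↔ ¬ IsPole ζ q := Iff.rfl

/-- Evaluation at `ζ` as a ring hom on the subring of functions with no pole at `ζ`. -/
def evalHom (ζ : ℂ) : polesub ζ →+* ℂ where
  toFun q := evalAt ζ (q : K)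
  map_one' := by simp [evalAt]
  map_zero' := by simp [evalAt]
  map_mul' := by
    rintro ⟨a, ha⟩ ⟨b, hb⟩
    have ha' : Polynomial.eval₂ (RingHom.id ℂ) ζ (RatFunc.denom a) ≠ 0 := by
      rwa [eval2_id]
    have hb' : Polynomial.eval₂ (RingHom.id ℂ) ζ (RatFunc.denom b) ≠ 0 := by
      rwa [eval2_id]
    simpa [evalAt] using RatFunc.eval_mul (f := RingHom.id ℂ) (a := ζ) ha' hb'
  map_add' := by
    rintro ⟨a, ha⟩ ⟨b, hb⟩
    have ha' : Polynomial.eval₂ (RingHom.id ℂ) ζ (RatFunc.denom a) ≠ 0 := by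
      rwa [eval2_id]
    have hb' : Polynomial.eval₂ (RingHom.id ℂ) ζ (RatFunc.denom b) ≠ 0 := by
      rwa [eval2_id]
    simpa [evalAt] using RatFunc.eval_add (f := RingHom.id ℂ) (a := ζ) ha' hb'

lemma evalAt_eq {ζ : ℂ} {q : K} (hq : q ∈ polesub ζ) :
    evalAt ζ q = (RatFunc.num q).eval ζ / (RatFunc.denom q).eval ζ := by
  simp [evalAt, RatFunc.eval, eval2_id]

lemma num_eval_ne_zero {ζ : ℂ} {q : K} (hq : q ∈ polesub ζ)
    (h : evalAt ζ q ≠ 0) : (RatFunc.num q).eval ζ ≠ 0 := by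
  rw [evalAt_eq hq] at h
  intro h0
  rw [h0, zero_div] at h
  exact h rfl

lemma inv_mem_polesub {ζ : ℂ} {q : K} (hq : q ∈ polesub ζ)
    (h : evalAt ζ q ≠ 0) : q⁻¹ ∈ polesub ζ := by
  have hnum := num_eval_ne_zero hq h
  have hq' : q⁻¹ = algebraMap (Polynomial ℂ) K (RatFunc.denom q) /
      algebraMap (Polynomial ℂ) K (RatFunc.num q) := by
    conv_lhs => rw [← RatFunc.num_div_denom q]
    rw [inv_div]
  intro hpole
  have hdvd : RatFunc.denom (q⁻¹) ∣ RatFunc.num q := by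
    rw [hq']; exact RatFunc.denom_div_dvd _ _
  exact hnum (eval_zero_of_dvd hdvd hpole)

section Matrices

variable {n m : Type} [Fintype n] [Fintype m] [DecidableEq m]

/-- Lift a matrix with no pole at `ζ` to the subring. -/
def liftM (ζ : ℂ) (B : Matrix n m K) (h : ∀ i j, B i j ∈ polesub ζ) :
    Matrix n m (polesub ζ) := fun i j => ⟨B i j, h i j⟩

lemma liftM_coe (ζ : ℂ) (B : Matrix n m K) (h : ∀ i j, B i j ∈ polesub ζ) :
    (liftM ζ B h).map (polesub ζ).subtype = B := rfl

lemma liftM_eval (ζ : ℂ) (B : Matrix n m K) (h : ∀ i j, B i j ∈ polesub ζ) :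
    (liftM ζ B h).map (evalHom ζ) = MEval ζ B := rfl

lemma MEval_mul {o : Type} [Fintype o] [DecidableEq o] (ζ : ℂ) (A : Matrix n o K) (B : Matrix o m K)
    (hA : ∀ i j, A i j ∈ polesub ζ) (hB : ∀ i j, B i j ∈ polesub ζ) :
    MEval ζ (A * B) = MEval ζ A * MEval ζ B := by
  have h1 : A * B = ((liftM ζ A hA) * (liftM ζ B hB)).map (polesub ζ).subtype := by
    rw [Matrix.map_mul]; rfl
  have h2 : MEval ζ (((liftM ζ A hA) * (liftM ζ B hB)).map (polesub ζ).subtype)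
      = ((liftM ζ A hA) * (liftM ζ B hB)).map (evalHom ζ) := rfl
  rw [h1, h2, Matrix.map_mul, liftM_eval, liftM_eval]

lemma det_mem_polesub (ζ : ℂ) (B : Matrix m m K) (h : ∀ i j, B i j ∈ polesub ζ) :
    B.det ∈ polesub ζ := by
  have : B.det = (polesub ζ).subtype ((liftM ζ B h).det) := by
    rw [RingHom.map_det]; rfl
  rw [this]; exact ((liftM ζ B h).det).2

lemma evalAt_det (ζ : ℂ) (B : Matrix m m K) (h : ∀ i j, B i j ∈ polesub ζ) :
    evalAt ζ B.det = (MEval ζ B).det := by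
  have h1 : B.det = (polesub ζ).subtype ((liftM ζ B h).det) := by
    rw [RingHom.map_det]; rfl
  have h2 : evalAt ζ ((polesub ζ).subtype ((liftM ζ B h).det))
      = (evalHom ζ) ((liftM ζ B h).det) := rfl
  rw [h1, h2, RingHom.map_det, ← liftM_eval]; rfl

lemma inv_entries_mem_polesub (ζ : ℂ) (B : Matrix m m K)
    (h : ∀ i j, B i j ∈ polesub ζ) (hdet : evalAt ζ B.det ≠ 0) :
    ∀ i j, B⁻¹ i j ∈ polesub ζ := by
  intro i j
  have hadj : B.adjugate i j ∈ polesub ζ := by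
    have h3 : B.adjugate = ((polesub ζ).subtype).mapMatrix ((liftM ζ B h).adjugate) := by
      rw [RingHom.map_adjugate]; rfl
    rw [h3]; exact (((liftM ζ B h).adjugate) i j).2
  have hBdet := det_mem_polesub ζ B h
  have hinv : (B.det)⁻¹ ∈ polesub ζ := inv_mem_polesub hBdet hdet
  have : B⁻¹ i j = (B.det)⁻¹ * B.adjugate i j := by
    rw [Matrix.inv_def, Ring.inverse_eq_inv]
    simp [Matrix.smul_apply]
  rw [this]
  exact mul_mem hinv hadj

lemma det_ne_zero_of_rank_eq [DecidableEq m] (A : Matrix m m ℂ)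
    (h : A.rank = Fintype.card m) : A.det ≠ 0 := by
  intro h0
  obtain ⟨v, hv, hAv⟩ := (Matrix.exists_mulVec_eq_zero_iff).mpr h0
  have hrange : LinearMap.range A.mulVecLin = ⊤ := by
    apply Submodule.eq_top_of_finrank_eq
    rw [← Matrix.rank, h, Module.finrank_fintype_fun_eq_card]
  have hsurj : Function.Surjective A.mulVecLin := LinearMap.range_eq_top.mp hrange
  have hinj : Function.Injective A.mulVecLin :=
    (LinearMap.injective_iff_surjective).mpr hsurj
  apply hv
  apply hinj
  simpa [Matrix.mulVecLin_apply] using hAv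

/-- From a rank condition on the product `W * Q` at a point without poles,
the determinant of `Q` evaluates to something nonzero. -/
lemma det_eval_ne_zero (ζ : ℂ) (W' : Matrix n m K) (Q' : Matrix m m K)
    [DecidableEq m]
    (hW : ∀ i j, W' i j ∈ polesub ζ) (hQ : ∀ i j, Q' i j ∈ polesub ζ)
    (hrank : (MEval ζ (W' * Q')).rank = Fintype.card m) :
    evalAt ζ Q'.det ≠ 0 := by
  rw [MEval_mul ζ W' Q' hW hQ] at hrank
  have hle : (MEval ζ W' * MEval ζ Q').rank ≤ (MEval ζ Q').rank :=
    Matrix.rank_mul_le_right _ _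
  have hle2 : (MEval ζ Q').rank ≤ Fintype.card m := Matrix.rank_le_card_width _
  have hrk : (MEval ζ Q').rank = Fintype.card m := le_antisymm hle2 (hrank ▸ hle)
  have hdet := det_ne_zero_of_rank_eq _ hrk
  rw [evalAt_det ζ Q' hQ]
  exact hdet

end Matrices

section Homs

/-- Ring homomorphisms on `K` agreeing on `C` and `X` agree everywhere. -/
lemma ratfunc_hom_ext (φ ψ : K →+* K)
    (hC : ∀ c : ℂ, φ (RatFunc.C c) = ψ (RatFunc.C c))
    (hX : φ RatFunc.X = ψ RatFunc.X) (q : K) : φ q = ψ q := by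
  have halg : ∀ f : Polynomial ℂ, φ (algebraMap (Polynomial ℂ) K f)
      = ψ (algebraMap (Polynomial ℂ) K f) := by
    intro f
    have : φ.comp (algebraMap (Polynomial ℂ) K) = ψ.comp (algebraMap (Polynomial ℂ) K) := by
      apply Polynomial.ringHom_ext
      · intro a; simpa [RatFunc.algebraMap_C] using hC a
      · simpa [RatFunc.algebraMap_X] using hX
    exact congrFun (congrArg (fun g => g.toFun) this) f
  conv_lhs => rw [← RatFunc.num_div_denom q]
  conv_rhs => rw [← RatFunc.num_div_denom q]
  rw [_root_.map_div₀, _root_.map_div₀, halg, halg]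

variable (φ : K →+* K) (e : ℂ →+* ℂ)
  (hφC : ∀ c : ℂ, φ (RatFunc.C c) = RatFunc.C (e c))
  (hφX : φ RatFunc.X = RatFunc.X⁻¹)

include hφC hφX in
/-- Key computation: `φ` applied to a polynomial, cleared of denominators. -/
lemma phi_algebraMap (N : ℕ) (f : Polynomial ℂ) (hN : f.natDegree ≤ N) :
    φ (algebraMap (Polynomial ℂ) K f) * RatFunc.X ^ N
      = algebraMap (Polynomial ℂ) K (Polynomial.reflect N (f.map e)) := by
  refine Polynomial.induction_with_natDegree_le
    (fun f => φ (algebraMap (Polynomial ℂ) K f) * RatFunc.X ^ N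
      = algebraMap (Polynomial ℂ) K (Polynomial.reflect N (f.map e))) N ?_ ?_ ?_ f hN
  · simp
  · intro n r _ hn
    have hXne : (RatFunc.X : K) ≠ 0 := RatFunc.X_ne_zero
    have halg : algebraMap (Polynomial ℂ) K (Polynomial.C r * Polynomial.X ^ n)
        = RatFunc.C r * RatFunc.X ^ n := by
      rw [_root_.map_mul, _root_.map_pow, RatFunc.algebraMap_C, RatFunc.algebraMap_X]
    rw [halg, _root_.map_mul, _root_.map_pow, hφC, hφX, Polynomial.map_mul, Polynomial.map_C,
      Polynomial.map_pow, Polynomial.map_X, Polynomial.reflect_C_mul_X_pow,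
      Polynomial.revAt_le hn, _root_.map_mul, _root_.map_pow, RatFunc.algebraMap_C, RatFunc.algebraMap_X]
    have hsplit : (RatFunc.X : K) ^ N = RatFunc.X ^ (N - n) * RatFunc.X ^ n := by
      rw [← pow_add, Nat.sub_add_cancel hn]
    rw [hsplit, mul_assoc, ← mul_assoc ((RatFunc.X : K)⁻¹ ^ n), inv_pow]
    rw [mul_comm (((RatFunc.X : K) ^ n)⁻¹) (RatFunc.X ^ (N - n))]
    rw [mul_assoc, inv_mul_cancel₀ (pow_ne_zero n hXne), mul_one]
  · intro f g _ _ hf hg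
    rw [_root_.map_add, _root_.map_add, add_mul, hf, hg, Polynomial.map_add, Polynomial.reflect_add, _root_.map_add]

lemma eval_reflect (β : ℂ) (hβ : β ≠ 0) (N : ℕ) (h : Polynomial ℂ)
    (hN : h.natDegree ≤ N) :
    Polynomial.eval β (Polynomial.reflect N h) = β ^ N * Polynomial.eval β⁻¹ h := by
  have : Invertible (β⁻¹) := invertibleOfNonzero (inv_ne_zero hβ)
  have key := Polynomial.eval₂_reflect_mul_pow (RingHom.id ℂ) (β⁻¹) N h hN
  rw [invOf_eq_inv, inv_inv, eval2_id, eval2_id] at key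
  have hβinv : (β⁻¹) ^ N ≠ 0 := pow_ne_zero _ (inv_ne_zero hβ)
  have hprod : β ^ N * β⁻¹ ^ N = 1 := by rw [← mul_pow, mul_inv_cancel₀ hβ, one_pow]
  linear_combination (β ^ N) * key - Polynomial.eval β (Polynomial.reflect N h) * hprod

include hφC hφX in
/-- If `r` has no pole at `1/conj β`, then `φ r` has no pole at `β` (for `β ≠ 0`). -/
lemma no_pole_phi (he : ∀ z : ℂ, e (e z) = z) (r : K) (β : ℂ) (hβ : β ≠ 0)
    (h : (RatFunc.denom r).eval ((e β)⁻¹) ≠ 0) : ¬ IsPole β (φ r) := by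
  intro hpole
  set f := RatFunc.num r with hf
  set g := RatFunc.denom r with hg
  set df := f.natDegree
  set dg := g.natDegree
  set Rf := Polynomial.reflect df (f.map e) with hRf
  set Rg := Polynomial.reflect dg (g.map e) with hRg
  have h1 : φ (algebraMap (Polynomial ℂ) K f) * RatFunc.X ^ df
      = algebraMap (Polynomial ℂ) K Rf := phi_algebraMap φ e hφC hφX df f le_rfl
  have h2 : φ (algebraMap (Polynomial ℂ) K g) * RatFunc.X ^ dg
      = algebraMap (Polynomial ℂ) K Rg := phi_algebraMap φ e hφC hφX dg g le_rfl
  have hXne : (RatFunc.X : K) ≠ 0 := RatFunc.X_ne_zero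
  have hgne : algebraMap (Polynomial ℂ) K g ≠ 0 :=
    RatFunc.algebraMap_ne_zero (RatFunc.denom_ne_zero r)
  have hφg : φ (algebraMap (Polynomial ℂ) K g) ≠ 0 := by
    simpa using (map_ne_zero φ).mpr hgne
  have hRgne : algebraMap (Polynomial ℂ) K Rg ≠ 0 := by
    rw [← h2]
    exact mul_ne_zero hφg (pow_ne_zero _ hXne)
  have hXalg : (RatFunc.X : K) = algebraMap (Polynomial ℂ) K Polynomial.X :=
    (RatFunc.algebraMap_X).symm
  have hform : φ r = algebraMap (Polynomial ℂ) K (Rf * Polynomial.X ^ dg) /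
      algebraMap (Polynomial ℂ) K (Rg * Polynomial.X ^ df) := by
    have hr : r = algebraMap (Polynomial ℂ) K f / algebraMap (Polynomial ℂ) K g :=
      (RatFunc.num_div_denom r).symm
    rw [hr, _root_.map_div₀]
    rw [_root_.map_mul, _root_.map_mul, _root_.map_pow, _root_.map_pow, ← hXalg, ← h1, ← h2]
    field_simp
  have hdvd : RatFunc.denom (φ r) ∣ Rg * Polynomial.X ^ df := by
    rw [hform]
    exact RatFunc.denom_div_dvd _ _
  have hz : Polynomial.eval β (Rg * Polynomial.X ^ df) = 0 := eval_zero_of_dvd hdvd hpole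
  rw [Polynomial.eval_mul, Polynomial.eval_pow, Polynomial.eval_X] at hz
  rcases mul_eq_zero.mp hz with h' | h'
  · have hevalRg : Polynomial.eval β Rg = β ^ dg * Polynomial.eval β⁻¹ (g.map e) := by
      apply eval_reflect β hβ
      exact le_trans (Polynomial.natDegree_map_le) le_rfl
    rw [hevalRg] at h'
    rcases mul_eq_zero.mp h' with h'' | h''
    · exact hβ (pow_eq_zero_iff'.mp h'').1
    · have hmap : Polynomial.eval β⁻¹ (g.map e) = e (Polynomial.eval ((e β)⁻¹) g) := by
        rw [Polynomial.eval_map]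
        calc Polynomial.eval₂ e β⁻¹ g = Polynomial.eval₂ e (e (e β⁻¹)) g := by rw [he]
          _ = e (Polynomial.eval (e β⁻¹) g) := Polynomial.eval₂_hom e _
          _ = e (Polynomial.eval ((e β)⁻¹) g) := by rw [map_inv₀]
      rw [hmap] at h''
      have h4 : Polynomial.eval ((e β)⁻¹) g = 0 := by
        have h5 := congrArg e h''
        rwa [he, map_zero] at h5
      exact h h4
  · exact hβ (pow_eq_zero_iff'.mp h').1

end Homs

section Invol

variable (σ τ : K →+* K)
  (hσC : ∀ c : ℂ, σ (RatFunc.C c) = RatFunc.C ((starRingEnd ℂ) c))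
  (hσX : σ RatFunc.X = RatFunc.X⁻¹)
  (hτC : ∀ c : ℂ, τ (RatFunc.C c) = RatFunc.C c)
  (hτX : τ RatFunc.X = RatFunc.X⁻¹)

include hσC hσX in
lemma sigma_sigma (q : K) : σ (σ q) = q := by
  have h := ratfunc_hom_ext (σ.comp σ) (RingHom.id K)
    (fun c => by simp [RingHom.comp_apply, hσC, Complex.conj_conj])
    (by simp only [RingHom.comp_apply, RingHom.id_apply, hσX, map_inv₀, inv_inv]) q
  simpa using h

include hσC hσX hτC hτX in
lemma tau_sigma_alg (h : Polynomial ℂ) :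
    τ (σ (algebraMap (Polynomial ℂ) K h))
      = algebraMap (Polynomial ℂ) K (h.map (starRingEnd ℂ)) := by
  have key : (τ.comp σ).comp (algebraMap (Polynomial ℂ) K)
      = (algebraMap (Polynomial ℂ) K).comp (Polynomial.mapRingHom (starRingEnd ℂ)) := by
    apply Polynomial.ringHom_ext
    · intro a
      simp [RatFunc.algebraMap_C, hσC, hτC]
    · simp [RatFunc.algebraMap_X, hσX, map_inv₀, hτX, inv_inv]
  have := congrFun (congrArg (fun g => g.toFun) key) h
  simpa using this

include hσC hσX hτC hτX in
lemma no_pole_zero_ts (r : K) (h : ¬ IsPole 0 r) : ¬ IsPole 0 (τ (σ r)) := by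
  intro hpole
  have hform : τ (σ r) = algebraMap (Polynomial ℂ) K ((RatFunc.num r).map (starRingEnd ℂ)) /
      algebraMap (Polynomial ℂ) K ((RatFunc.denom r).map (starRingEnd ℂ)) := by
    conv_lhs => rw [← RatFunc.num_div_denom r]
    rw [_root_.map_div₀, _root_.map_div₀, tau_sigma_alg σ τ hσC hσX hτC hτX,
      tau_sigma_alg σ τ hσC hσX hτC hτX]
  have hdvd : RatFunc.denom (τ (σ r)) ∣ (RatFunc.denom r).map (starRingEnd ℂ) := by
    rw [hform]; exact RatFunc.denom_div_dvd _ _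
  have hz := eval_zero_of_dvd hdvd hpole
  have : Polynomial.eval (0 : ℂ) ((RatFunc.denom r).map (starRingEnd ℂ))
      = (starRingEnd ℂ) (Polynomial.eval 0 (RatFunc.denom r)) := by
    rw [Polynomial.eval_map]
    calc Polynomial.eval₂ (starRingEnd ℂ) 0 (RatFunc.denom r)
        = Polynomial.eval₂ (starRingEnd ℂ) ((starRingEnd ℂ) 0) (RatFunc.denom r) := by
          rw [map_zero]
      _ = (starRingEnd ℂ) (Polynomial.eval 0 (RatFunc.denom r)) :=
          Polynomial.eval₂_hom _ _
  rw [this] at hz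
  exact h (by simpa [IsPole] using congrArg (starRingEnd ℂ) hz)

include hσC hσX hτC hτX in
lemma tausigma_invol (q : K) : τ (σ (τ (σ q))) = q := by
  have h := ratfunc_hom_ext ((τ.comp σ).comp (τ.comp σ)) (RingHom.id K)
    (fun c => by simp [RingHom.comp_apply, hσC, hτC, Complex.conj_conj])
    (by simp only [RingHom.comp_apply, RingHom.id_apply, hσX, map_inv₀, hτX, inv_inv]) q
  simpa using h

include hσC hσX hτC hτX in
lemma sigma_eq_ts_tau (q : K) : σ q = τ (σ (τ q)) := by
  exact ratfunc_hom_ext σ ((τ.comp σ).comp τ)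
    (fun c => by simp [RingHom.comp_apply, hσC, hτC])
    (by simp only [RingHom.comp_apply, hσX, map_inv₀, hτX, inv_inv]) q

include hσC hσX in
lemma constant_of_no_poles (q : K)
    (hq : ∀ ζ : ℂ, ¬ IsPole ζ q) (hsq : ∀ ζ : ℂ, ¬ IsPole ζ (σ q)) :
    ∃ c : ℂ, q = RatFunc.C c := by
  -- the denominators of q and σ q are 1
  have hden : ∀ r : K, (∀ ζ : ℂ, ¬ IsPole ζ r) → RatFunc.denom r = 1 := by
    intro r hr
    have hm := RatFunc.monic_denom r
    have hdeg : (RatFunc.denom r).degree = 0 := by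
      by_contra hne
      obtain ⟨z, hz⟩ := Complex.isAlgClosed.exists_root _ hne
      exact hr z hz
    have hnat : (RatFunc.denom r).natDegree = 0 :=
      Polynomial.natDegree_eq_zero_iff_degree_le_zero.mpr (le_of_eq hdeg)
    exact (Polynomial.Monic.natDegree_eq_zero hm).mp hnat
  have hqpoly : q = algebraMap (Polynomial ℂ) K (RatFunc.num q) := by
    conv_lhs => rw [← RatFunc.num_div_denom q]
    rw [hden q hq]
    simp
  have hspoly : σ q = algebraMap (Polynomial ℂ) K (RatFunc.num (σ q)) := by
    conv_lhs => rw [← RatFunc.num_div_denom (σ q)]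
    rw [hden (σ q) hsq]
    simp
  set f := RatFunc.num q with hf
  set df := f.natDegree with hdf
  rcases Nat.eq_zero_or_pos df with h0 | hpos
  · obtain ⟨c, hc⟩ := Polynomial.natDegree_eq_zero.mp h0
    refine ⟨c, ?_⟩
    rw [hqpoly, ← hc, RatFunc.algebraMap_C]
  · exfalso
    have h1 : σ (algebraMap (Polynomial ℂ) K f) * RatFunc.X ^ df
        = algebraMap (Polynomial ℂ) K
          (Polynomial.reflect df (f.map (starRingEnd ℂ))) :=
      phi_algebraMap σ (starRingEnd ℂ) hσC hσX df f le_rfl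
    rw [← hqpoly, hspoly] at h1
    have hXalg : (RatFunc.X : K) = algebraMap (Polynomial ℂ) K Polynomial.X :=
      (RatFunc.algebraMap_X).symm
    rw [hXalg, ← _root_.map_pow, ← _root_.map_mul] at h1
    have h2 := RatFunc.algebraMap_injective ℂ h1
    have h3 := congrArg (Polynomial.eval (0 : ℂ)) h2
    rw [Polynomial.eval_mul, Polynomial.eval_pow, Polynomial.eval_X,
      zero_pow hpos.ne', mul_zero] at h3
    have h4 : Polynomial.eval (0 : ℂ)
        (Polynomial.reflect df (f.map (starRingEnd ℂ)))
        = (starRingEnd ℂ) (f.coeff df) := by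
      rw [← Polynomial.coeff_zero_eq_eval_zero, Polynomial.coeff_reflect,
        Polynomial.revAt_le (Nat.zero_le df), Nat.sub_zero, Polynomial.coeff_map]
    rw [h4] at h3
    have hfne : f ≠ 0 := by
      intro hfz
      rw [hdf, hfz, Polynomial.natDegree_zero] at hpos
      exact Nat.lt_irrefl 0 hpos
    have : f.coeff df ≠ 0 := by
      rw [hdf]
      exact Polynomial.leadingCoeff_ne_zero.mpr hfne
    exact this (by simpa using congrArg (starRingEnd ℂ) h3.symm)

end Invol

end MinPhaseAux

open MinPhaseAux

theorem minimum_phase_factor_unique_up_to_unitary (m p : ℕ)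
    (σ : K →+* K)
    (hσC : ∀ c : ℂ, σ (RatFunc.C c) = RatFunc.C ((starRingEnd ℂ) c))
    (hσX : σ RatFunc.X = RatFunc.X⁻¹)
    (τ : K →+* K)
    (hτC : ∀ c : ℂ, τ (RatFunc.C c) = RatFunc.C c)
    (hτX : τ RatFunc.X = RatFunc.X⁻¹)
    (W : Matrix (Fin (m + p)) (Fin m) K)
    (hWmp : MinPhaseD τ W)
    (hWrank : W.rank = m)
    (Q : Matrix (Fin m) (Fin m) K)
    (hinner : Q * paraStar σ Q = 1)
    (hQprop : ∀ i j, Proper τ (Q i j))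
    (hQpole : ∀ α : ℂ, MIsPole α Q → ‖α‖ < 1)
    (hWQmp : MinPhaseD τ (W * Q)) :
    ∃ U : Matrix (Fin m) (Fin m) ℂ,
      Uᴴ * U = 1 ∧ U * Uᴴ = 1 ∧ Q = U.map (fun c : ℂ => (RatFunc.C c : K)) := by
  classical
  have hQs : paraStar σ Q * Q = 1 := mul_eq_one_comm.mp hinner
  have hQinv : Q⁻¹ = paraStar σ Q := Matrix.inv_eq_right_inv hinner
  -- inverse commutes with τ entrywise
  have hmapinv : (Q.map τ)⁻¹ = Q⁻¹.map τ := by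
    apply Matrix.inv_eq_left_inv
    have : Q⁻¹ * Q = 1 := by rw [hQinv]; exact hQs
    rw [← Matrix.map_mul, this]
    exact Matrix.map_one _ (map_zero τ) (map_one τ)
  -- memberships outside the unit disc
  have hWmem : ∀ β : ℂ, 1 < ‖β‖ → ∀ i j, W i j ∈ polesub β := by
    intro β hβ i j hpole
    exact absurd (hWmp.2.1 β ⟨i, j, hpole⟩) (by simp only [not_lt]; linarith)
  have hQmem : ∀ β : ℂ, 1 < ‖β‖ → ∀ i j, Q i j ∈ polesub β := by
    intro β hβ i j hpole
    exact absurd (hQpole β ⟨i, j, hpole⟩) (by simp only [not_lt]; linarith)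
  have hQdet : ∀ β : ℂ, 1 < ‖β‖ → evalAt β Q.det ≠ 0 := by
    intro β hβ
    exact det_eval_ne_zero β W Q (hWmem β hβ) (hQmem β hβ) (hWQmp.2.2.1 β hβ)
  have hQinvmem : ∀ β : ℂ, 1 < ‖β‖ → ∀ i j, Q⁻¹ i j ∈ polesub β := by
    intro β hβ
    exact inv_entries_mem_polesub β Q (hQmem β hβ) (hQdet β hβ)
  -- memberships at 0 for the τ-images (properness)
  have hWτmem : ∀ i j, (W.map τ) i j ∈ polesub (0 : ℂ) := fun i j => hWmp.1 i j
  have hQτmem : ∀ i j, (Q.map τ) i j ∈ polesub (0 : ℂ) := fun i j => hQprop i j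
  have hrank0 : (MEval 0 ((W.map τ) * (Q.map τ))).rank = Fintype.card (Fin m) := by
    rw [← Matrix.map_mul]
    exact hWQmp.2.2.2
  have hQτdet : evalAt 0 (Q.map τ).det ≠ 0 :=
    det_eval_ne_zero 0 (W.map τ) (Q.map τ) hWτmem hQτmem hrank0
  have hQτinvmem : ∀ i j, (Q.map τ)⁻¹ i j ∈ polesub (0 : ℂ) :=
    inv_entries_mem_polesub 0 (Q.map τ) hQτmem hQτdet
  have hconj2 : ∀ z : ℂ, (starRingEnd ℂ) ((starRingEnd ℂ) z) = z := fun z =>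
    Complex.conj_conj z
  -- no entry of Q has a pole
  have hnopole : ∀ i j (ζ : ℂ), ¬ IsPole ζ (Q i j) := by
    intro i j ζ hpole
    have habs : ‖ζ‖ < 1 := hQpole ζ ⟨i, j, hpole⟩
    by_cases hζ : ζ = 0
    · subst hζ
      have h1 : ¬ IsPole 0 (τ (σ (Q i j))) := by
        have hmem := hQτinvmem j i
        rw [hmapinv] at hmem
        have he : (Q⁻¹.map τ) j i = τ (σ (Q i j)) := by rw [hQinv]; rfl
        rwa [he] at hmem
      have h2 := no_pole_zero_ts σ τ hσC hσX hτC hτX (τ (σ (Q i j))) h1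
      rw [tausigma_invol σ τ hσC hσX hτC hτX] at h2
      exact h2 hpole
    · set β : ℂ := ((starRingEnd ℂ) ζ)⁻¹ with hβdef
      have hζabs : 0 < ‖ζ‖ := by
        exact norm_pos_iff.mpr hζ
      have hβ : 1 < ‖β‖ := by
        rw [hβdef, norm_inv, Complex.norm_conj]
        exact (one_lt_inv₀ hζabs).mpr habs
      have hσnp : ¬ IsPole β (σ (Q i j)) := by
        have hmem := hQinvmem β hβ j i
        rw [hQinv] at hmem
        exact hmem
      have h3 := no_pole_phi σ (starRingEnd ℂ) hσC hσX hconj2 (σ (Q i j)) ζ hζ hσnp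
      rw [sigma_sigma σ hσC hσX] at h3
      exact h3 hpole
  -- no entry of σ Q has a pole
  have hσnopole : ∀ i j (ζ : ℂ), ¬ IsPole ζ (σ (Q i j)) := by
    intro i j ζ
    by_cases hζ : ζ = 0
    · subst hζ
      rw [sigma_eq_ts_tau σ τ hσC hσX hτC hτX]
      exact no_pole_zero_ts σ τ hσC hσX hτC hτX (τ (Q i j)) (hQprop i j)
    · exact no_pole_phi σ (starRingEnd ℂ) hσC hσX hconj2 (Q i j) ζ hζ
        (hnopole i j _)
  -- entries of Q are constant
  have hconst : ∀ i j, ∃ c : ℂ, Q i j = RatFunc.C c := fun i j =>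
    constant_of_no_poles σ hσC hσX (Q i j) (hnopole i j) (hσnopole i j)
  choose U0 hU using hconst
  set U : Matrix (Fin m) (Fin m) ℂ := Matrix.of U0 with hUdef
  have hU' : ∀ i j, Q i j = RatFunc.C (U i j) := fun i j => hU i j
  have hmap : Q = U.map (fun c : ℂ => (RatFunc.C c : K)) := by
    ext i j
    exact hU' i j
  have hstar : paraStar σ Q = Uᴴ.map (fun c : ℂ => (RatFunc.C c : K)) := by
    ext i j
    show σ (Q j i) = RatFunc.C (Uᴴ i j)
    rw [hU' j i, hσC, Matrix.conjTranspose_apply]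
    rfl
  have hCinj : Function.Injective (RatFunc.C : ℂ →+* K) := RingHom.injective (RatFunc.C : ℂ →+* K)
  have hUU : U * Uᴴ = 1 := by
    have h1 : (U * Uᴴ).map (RatFunc.C : ℂ →+* K)
        = (1 : Matrix (Fin m) (Fin m) ℂ).map (RatFunc.C : ℂ →+* K) := by
      rw [Matrix.map_mul]
      rw [Matrix.map_one _ (map_zero RatFunc.C) (map_one RatFunc.C)]
      calc U.map (RatFunc.C : ℂ →+* K) * Uᴴ.map (RatFunc.C : ℂ →+* K)
          = Q * paraStar σ Q := by rw [hstar, hmap]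
        _ = 1 := hinner
    ext i j
    have h2 : RatFunc.C ((U * Uᴴ) i j) = RatFunc.C ((1 : Matrix (Fin m) (Fin m) ℂ) i j) := by
      have := congrArg (fun M => M i j) h1
      simpa [Matrix.map_apply] using this
    exact hCinj h2
  exact ⟨U, mul_eq_one_comm.mp hUU, hUU, hmap⟩
end
end

section
/- Let G1 be an m×m invertible minimum-phase matrix over K = RatFunc ℂ and let H be a p×m matrix over K such that every entry of H is proper and every pole α of H satisfies |α| < 1. Then the (m+p)×m matrix W := [G1; H·G1] (G1 stacked on top of H·G1) is minimum-phase with full column rank m, and the spectral density Φ := W W* has blocks Φ11 = G1 G1* (invertible), Φ21 = H Φ11, and Φ21 Φ11⁻¹ = H. (The special-case spectral factorization formula (3.4) of the paper: when H is stable, a minimum-phase full-rank spectral factor is obtained without any coprime factorization.) -/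
open Matrix

noncomputable section

/-! ### Auxiliary lemmas -/

lemma isPole_add_cases {α : ℂ} {q r : K} (h : IsPole α (q + r)) :
    IsPole α q ∨ IsPole α r := by
  unfold IsPole at *
  obtain ⟨c, hc⟩ := RatFunc.denom_add_dvd q r
  have h2 : Polynomial.eval α ((q + r).denom * c) = 0 := by
    rw [Polynomial.eval_mul, h, zero_mul]
  rw [← hc, Polynomial.eval_mul] at h2
  exact mul_eq_zero.mp h2

lemma isPole_mul_cases {α : ℂ} {q r : K} (h : IsPole α (q * r)) :
    IsPole α q ∨ IsPole α r := by
  unfold IsPole at *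
  obtain ⟨c, hc⟩ := RatFunc.denom_mul_dvd q r
  have h2 : Polynomial.eval α ((q * r).denom * c) = 0 := by
    rw [Polynomial.eval_mul, h, zero_mul]
  rw [← hc, Polynomial.eval_mul] at h2
  exact mul_eq_zero.mp h2

lemma notPole_sum {ι : Type*} (α : ℂ) (s : Finset ι) (f : ι → K)
    (h : ∀ k ∈ s, ¬ IsPole α (f k)) : ¬ IsPole α (∑ k ∈ s, f k) := by
  refine Finset.sum_induction f (fun q => ¬ IsPole α q) ?_ ?_ h
  · intro a b ha hb hab
    rcases isPole_add_cases hab with h' | h' <;> [exact ha h'; exact hb h']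
  · intro h0
    unfold IsPole at h0
    simp [RatFunc.denom_zero] at h0

lemma rank_le_rank_fromRows {F : Type*} [Field F] {m' n' p' : Type}
    [Fintype m'] [Fintype n'] [Fintype p']
    (A : Matrix m' n' F) (B : Matrix p' n' F) :
    A.rank ≤ (Matrix.fromRows A B).rank := by
  have h : A.mulVecLin =
      (LinearMap.funLeft F F Sum.inl).comp (Matrix.fromRows A B).mulVecLin := by
    refine LinearMap.ext fun v => funext fun i => ?_
    simp [Matrix.fromRows_mulVec]
  rw [Matrix.rank, Matrix.rank, h, LinearMap.range_comp]
  exact Submodule.finrank_map_le _ _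

lemma MEval_fromRows {I₁ I₂ J : Type} (α : ℂ) (A : Matrix I₁ J K) (B : Matrix I₂ J K) :
    MEval α (Matrix.fromRows A B) = Matrix.fromRows (MEval α A) (MEval α B) := by
  ext i j
  cases i <;> rfl

lemma map_fromRows' {I₁ I₂ J : Type} (f : K → K) (A : Matrix I₁ J K) (B : Matrix I₂ J K) :
    (Matrix.fromRows A B).map f = Matrix.fromRows (A.map f) (B.map f) := by
  ext i j
  cases i <;> rfl

theorem special_case_spectral_factorization (m p : ℕ)
    (σ : K →+* K)
    (hσC : ∀ c : ℂ, σ (RatFunc.C c) = RatFunc.C ((starRingEnd ℂ) c))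
    (hσX : σ RatFunc.X = RatFunc.X⁻¹)
    (τ : K →+* K)
    (hτC : ∀ c : ℂ, τ (RatFunc.C c) = RatFunc.C c)
    (hτX : τ RatFunc.X = RatFunc.X⁻¹)
    (G1 : Matrix (Fin m) (Fin m) K)
    (hG1det : IsUnit G1.det)
    (hG1mp : MinPhaseD τ G1)
    (H : Matrix (Fin p) (Fin m) K)
    (hHprop : ∀ i j, Proper τ (H i j))
    (hHpole : ∀ α : ℂ, MIsPole α H → ‖α‖ < 1) :
    MinPhaseD τ (Matrix.fromRows G1 (H * G1)) ∧
    (Matrix.fromRows G1 (H * G1)).rank = m ∧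
    (let W := Matrix.fromRows G1 (H * G1);
     let Φ := W * paraStar σ W;
     Φ.toBlocks₁₁ = G1 * paraStar σ G1 ∧
     IsUnit (Φ.toBlocks₁₁).det ∧
     Φ.toBlocks₂₁ = H * Φ.toBlocks₁₁ ∧
     Φ.toBlocks₂₁ * (Φ.toBlocks₁₁)⁻¹ = H) := by
  obtain ⟨hGprop, hGpole, hGrank, hGinf⟩ := hG1mp
  -- properness of the entries of H * G1
  have hHGprop : ∀ i j, Proper τ ((H * G1) i j) := by
    intro i j
    unfold Proper
    have : τ ((H * G1) i j) = ∑ k, τ (H i k) * τ (G1 k j) := by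
      simp [Matrix.mul_apply, map_sum, _root_.map_mul]
    rw [this]
    refine notPole_sum 0 _ _ fun k _ hk => ?_
    rcases isPole_mul_cases hk with h' | h'
    · exact hHprop i k h'
    · exact hGprop k j h'
  -- poles of H * G1
  have hHGpole : ∀ α : ℂ, 1 ≤ ‖α‖ → ∀ i j, ¬ IsPole α ((H * G1) i j) := by
    intro α hα i j hij
    have : (H * G1) i j = ∑ k, H i k * G1 k j := Matrix.mul_apply
    rw [this] at hij
    refine notPole_sum α _ _ (fun k _ hk => ?_) hij
    rcases isPole_mul_cases hk with h' | h'
    · exact absurd (hHpole α ⟨i, k, h'⟩) (not_lt.mpr hα)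
    · exact absurd (hGpole α ⟨k, j, h'⟩) (not_lt.mpr hα)
  refine ⟨⟨?_, ?_, ?_, ?_⟩, ?_, ?_, ?_, ?_, ?_⟩
  · -- properness
    intro i j
    cases i with
    | inl i => exact hGprop i j
    | inr i => exact hHGprop i j
  · -- poles inside the unit circle
    intro α hα
    by_contra hc
    push_neg at hc
    obtain ⟨i, j, hij⟩ := hα
    cases i with
    | inl i => exact hc.not_gt (hGpole α ⟨i, j, hij⟩)
    | inr i => exact hHGpole α hc i j hij
  · -- full rank outside the closed unit disc
    intro α hα
    rw [Fintype.card_fin, MEval_fromRows]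
    refine le_antisymm ((Matrix.rank_le_card_width _).trans_eq (Fintype.card_fin m)) ?_
    calc m = (MEval α G1).rank := by rw [hGrank α hα, Fintype.card_fin]
      _ ≤ _ := rank_le_rank_fromRows _ _
  · -- full rank at infinity
    rw [Fintype.card_fin, map_fromRows', MEval_fromRows]
    refine le_antisymm ((Matrix.rank_le_card_width _).trans_eq (Fintype.card_fin m)) ?_
    calc m = (MEval 0 (G1.map τ)).rank := by rw [hGinf, Fintype.card_fin]
      _ ≤ _ := rank_le_rank_fromRows _ _
  · -- rank over K
    refine le_antisymm ((Matrix.rank_le_card_width _).trans_eq (Fintype.card_fin m)) ?_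
    calc m = G1.rank := by rw [Matrix.rank_of_isUnit G1 ((Matrix.isUnit_iff_isUnit_det G1).mpr hG1det), Fintype.card_fin]
      _ ≤ _ := rank_le_rank_fromRows _ _
  -- block structure of the spectral density
  case refine_6 =>
    ext i j
    simp [Matrix.toBlocks₁₁, Matrix.mul_apply, paraStar, Matrix.fromRows_apply_inl, Matrix.fromRows_apply_inr]
  case refine_7 =>
    have h11 : (Matrix.fromRows G1 (H * G1) *
        paraStar σ (Matrix.fromRows G1 (H * G1))).toBlocks₁₁ = G1 * paraStar σ G1 := by
      ext i j
      simp [Matrix.toBlocks₁₁, Matrix.mul_apply, paraStar, Matrix.fromRows_apply_inl, Matrix.fromRows_apply_inr]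
    rw [h11, Matrix.det_mul]
    refine hG1det.mul ?_
    rw [paraStar, Matrix.det_transpose]
    have : (G1.map ⇑σ).det = σ G1.det := (RingHom.map_det σ G1).symm
    rw [this]
    exact hG1det.map σ
  case refine_8 =>
    have h11 : (Matrix.fromRows G1 (H * G1) *
        paraStar σ (Matrix.fromRows G1 (H * G1))).toBlocks₁₁ = G1 * paraStar σ G1 := by
      ext i j
      simp [Matrix.toBlocks₁₁, Matrix.mul_apply, paraStar, Matrix.fromRows_apply_inl, Matrix.fromRows_apply_inr]
    have h21 : (Matrix.fromRows G1 (H * G1) *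
        paraStar σ (Matrix.fromRows G1 (H * G1))).toBlocks₂₁ = (H * G1) * paraStar σ G1 := by
      ext i j
      simp [Matrix.toBlocks₂₁, Matrix.mul_apply, paraStar, Matrix.fromRows_apply_inl, Matrix.fromRows_apply_inr]
    rw [h11, h21, Matrix.mul_assoc]
  case refine_9 =>
    have h11 : (Matrix.fromRows G1 (H * G1) *
        paraStar σ (Matrix.fromRows G1 (H * G1))).toBlocks₁₁ = G1 * paraStar σ G1 := by
      ext i j
      simp [Matrix.toBlocks₁₁, Matrix.mul_apply, paraStar, Matrix.fromRows_apply_inl, Matrix.fromRows_apply_inr]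
    have h21 : (Matrix.fromRows G1 (H * G1) *
        paraStar σ (Matrix.fromRows G1 (H * G1))).toBlocks₂₁ = (H * G1) * paraStar σ G1 := by
      ext i j
      simp [Matrix.toBlocks₂₁, Matrix.mul_apply, paraStar, Matrix.fromRows_apply_inl, Matrix.fromRows_apply_inr]
    have hdet : IsUnit (G1 * paraStar σ G1).det := by
      rw [Matrix.det_mul]
      refine hG1det.mul ?_
      rw [paraStar, Matrix.det_transpose]
      have : (G1.map ⇑σ).det = σ G1.det := (RingHom.map_det σ G1).symm
      rw [this]
      exact hG1det.map σ
    rw [h11, h21, Matrix.mul_assoc H G1 (paraStar σ G1),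
      Matrix.mul_assoc H (G1 * paraStar σ G1) (G1 * paraStar σ G1)⁻¹,
      Matrix.mul_nonsing_inv _ hdet, Matrix.mul_one]
end
end

section
/- Let A, C ∈ M_n(ℂ) and B, D ∈ M_p(ℂ) be such that both matrix pencils are regular, i.e. the polynomial λ ↦ det(A − λ C) is not identically zero and the polynomial λ ↦ det(D − λ B) is not identically zero. Then the linear map X ↦ A X Bᵀ + C X Dᵀ on n×p complex matrices is bijective (equivalently, the Sylvester-type equation A X Bᵀ + C X Dᵀ = E has a unique solution X for every E) if and only if for every nonzero pair (α, β) ∈ ℂ² with det(β A − α C) = 0 and every nonzero pair (γ, δ) ∈ ℂ² with det(δ D − γ B) = 0, one has α δ + β γ ≠ 0. (Theorem C.1 of the paper, in homogeneous-coordinate form: unique solvability of a Sylvester-type equation holds iff the pencils are regular and the spectrum of one pencil is disjoint from the negative of the spectrum of the other, where generalized eigenvalues, including infinite ones, are encoded projectively by nonzero pairs.) -/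
open Matrix Polynomial

noncomputable section

private lemma vecMulVec_conj {n p : ℕ} (A : Matrix (Fin n) (Fin n) ℂ)
    (B : Matrix (Fin p) (Fin p) ℂ) (x : Fin n → ℂ) (y : Fin p → ℂ) :
    A * vecMulVec x y * Bᵀ = vecMulVec (A *ᵥ x) (B *ᵥ y) := by
  rw [vecMulVec_eq Unit, vecMulVec_eq Unit, ← Matrix.mul_assoc A, ← replicateCol_mulVec,
    Matrix.mul_assoc, ← replicateRow_vecMul, vecMul_transpose]

private lemma vecMulVec_smul_left {n p : ℕ} (c : ℂ) (x : Fin n → ℂ) (y : Fin p → ℂ) :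
    vecMulVec (c • x) y = c • vecMulVec x y := by
  ext i j; simp [vecMulVec_apply, mul_assoc]

private lemma vecMulVec_smul_right {n p : ℕ} (c : ℂ) (x : Fin n → ℂ) (y : Fin p → ℂ) :
    vecMulVec x (c • y) = c • vecMulVec x y := by
  ext i j; simp [vecMulVec_apply]; ring

private lemma charpoly_eval' {m : ℕ} (M : Matrix (Fin m) (Fin m) ℂ) (r : ℂ) :
    M.charpoly.eval r = (r • (1 : Matrix (Fin m) (Fin m) ℂ) - M).det := by
  rw [Matrix.charpoly, ← coe_evalRingHom, RingHom.map_det]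
  congr 1
  ext i j
  by_cases h : i = j
  · subst h; simp [charmatrix_apply, Matrix.one_apply]
  · simp [charmatrix_apply_ne _ _ _ h, Matrix.one_apply, h]

private lemma pencil_eval {m : ℕ} (M N : Matrix (Fin m) (Fin m) ℂ) (r : ℂ) :
    (((M.map Polynomial.C) - (Polynomial.X : ℂ[X]) • (N.map Polynomial.C)).det).eval r
      = (M - r • N).det := by
  rw [← coe_evalRingHom, RingHom.map_det]
  congr 1
  ext i j
  simp only [RingHom.mapMatrix_apply, Matrix.map_apply, Matrix.sub_apply, Matrix.smul_apply,
    smul_eq_mul, coe_evalRingHom, Polynomial.eval_sub, Polynomial.eval_mul, Polynomial.eval_C,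
    Polynomial.eval_X]

private lemma aeval_comm {n p : ℕ} (M : Matrix (Fin n) (Fin n) ℂ)
    (N : Matrix (Fin p) (Fin p) ℂ) (X0 : Matrix (Fin n) (Fin p) ℂ)
    (h : M * X0 = X0 * N) (f : ℂ[X]) :
    (aeval M f) * X0 = X0 * (aeval N f) := by
  have hpow : ∀ k : ℕ, M ^ k * X0 = X0 * N ^ k := by
    intro k
    induction k with
    | zero => simp
    | succ k ih =>
      rw [pow_succ, pow_succ, Matrix.mul_assoc, h, ← Matrix.mul_assoc, ih, Matrix.mul_assoc]
  induction f using Polynomial.induction_on' with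
  | add f g hf hg => rw [map_add, map_add, Matrix.add_mul, Matrix.mul_add, hf, hg]
  | monomial k a =>
      simp only [aeval_monomial, Algebra.algebraMap_eq_smul_one, Matrix.smul_mul, one_mul]
      rw [hpow, Matrix.mul_smul]

private lemma det_aeval_prod {m : ℕ} (N : Matrix (Fin m) (Fin m) ℂ) (t : Multiset ℂ) :
    (Polynomial.aeval N (t.map fun r => (Polynomial.X : Polynomial ℂ) - Polynomial.C r).prod).det
      = (t.map fun r => (N - r • 1).det).prod := by
  induction t using Multiset.induction_on with
  | empty => simp
  | cons r t ih =>
      have e : (Polynomial.aeval N) ((Polynomial.X : Polynomial ℂ) - Polynomial.C r)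
          = N - r • 1 := by
        simp [Algebra.algebraMap_eq_smul_one]
      simp only [Multiset.map_cons, Multiset.prod_cons, _root_.map_mul, Matrix.det_mul, ih, e]

theorem sylvester_unique_solvability (n p : ℕ)
    (A C : Matrix (Fin n) (Fin n) ℂ)
    (B D : Matrix (Fin p) (Fin p) ℂ)
    (hRegA : ∃ lam : ℂ, (A - lam • C).det ≠ 0)
    (hRegB : ∃ lam : ℂ, (D - lam • B).det ≠ 0) :
    Function.Bijective
        (fun X : Matrix (Fin n) (Fin p) ℂ => A * X * Bᵀ + C * X * Dᵀ)
    ↔ ∀ α β γ δ : ℂ, (α, β) ≠ (0, 0) → (β • A - α • C).det = 0 →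
        (γ, δ) ≠ (0, 0) → (δ • D - γ • B).det = 0 →
        α * δ + β * γ ≠ 0 := by
  classical
  constructor
  · rintro ⟨hinj, -⟩ α β γ δ hab h1 hcd h2 hsum
    obtain ⟨x, hx0, hx⟩ := (Matrix.exists_mulVec_eq_zero_iff).mpr h1
    obtain ⟨y, hy0, hy⟩ := (Matrix.exists_mulVec_eq_zero_iff).mpr h2
    rw [Matrix.sub_mulVec, Matrix.smul_mulVec, Matrix.smul_mulVec,
      sub_eq_zero] at hx hy
    have hXne : vecMulVec x y ≠ 0 := by
      obtain ⟨i, hi⟩ := Function.ne_iff.mp hx0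
      obtain ⟨j, hj⟩ := Function.ne_iff.mp hy0
      intro hcon
      have h := congrFun (congrFun hcon i) j
      simp only [vecMulVec_apply, Matrix.zero_apply, mul_eq_zero] at h
      simp only [Pi.zero_apply] at hi hj
      tauto
    have hLzero : A * vecMulVec x y * Bᵀ + C * vecMulVec x y * Dᵀ = 0 := by
      rw [vecMulVec_conj, vecMulVec_conj]
      by_cases hβ : β = 0
      · have hα : α ≠ 0 := fun h => hab (by simp [h, hβ])
        have hδ : δ = 0 := by
          have : α * δ = 0 := by rw [← hsum, hβ]; ring
          exact (mul_eq_zero.mp this).resolve_left hα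
        have hγ : γ ≠ 0 := fun h => hcd (by simp [h, hδ])
        have hCx : C *ᵥ x = 0 := by
          have := hx; rw [hβ, zero_smul] at this
          exact (smul_eq_zero.mp this.symm).resolve_left hα
        have hBy : B *ᵥ y = 0 := by
          have := hy; rw [hδ, zero_smul] at this
          exact (smul_eq_zero.mp this.symm).resolve_left hγ
        ext i j
        simp [hCx, hBy, vecMulVec_apply]
      · have hδ : δ ≠ 0 := by
          intro h
          have hγ : γ ≠ 0 := fun h' => hcd (by simp [h, h'])
          have : β * γ = 0 := by rw [← hsum, h]; ring
          exact hγ ((mul_eq_zero.mp this).resolve_left hβ)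
        have key : (β * δ) • (vecMulVec (A *ᵥ x) (B *ᵥ y) + vecMulVec (C *ᵥ x) (D *ᵥ y))
            = 0 := by
          have e1 : β • vecMulVec (A *ᵥ x) (B *ᵥ y)
              = α • vecMulVec (C *ᵥ x) (B *ᵥ y) := by
            rw [← vecMulVec_smul_left, hx, vecMulVec_smul_left]
          have e2 : δ • vecMulVec (C *ᵥ x) (D *ᵥ y)
              = γ • vecMulVec (C *ᵥ x) (B *ᵥ y) := by
            rw [← vecMulVec_smul_right, hy, vecMulVec_smul_right]
          calc (β * δ) • (vecMulVec (A *ᵥ x) (B *ᵥ y) + vecMulVec (C *ᵥ x) (D *ᵥ y))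
              = δ • (β • vecMulVec (A *ᵥ x) (B *ᵥ y))
                + β • (δ • vecMulVec (C *ᵥ x) (D *ᵥ y)) := by
                rw [smul_add, smul_smul, smul_smul, mul_comm δ β]
            _ = δ • (α • vecMulVec (C *ᵥ x) (B *ᵥ y))
                + β • (γ • vecMulVec (C *ᵥ x) (B *ᵥ y)) := by rw [e1, e2]
            _ = (α * δ + β * γ) • vecMulVec (C *ᵥ x) (B *ᵥ y) := by
                rw [smul_smul, smul_smul, ← add_smul, mul_comm δ α]
            _ = 0 := by rw [hsum, zero_smul]
        have hβδ : β * δ ≠ 0 := mul_ne_zero hβ hδ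
        exact (smul_eq_zero.mp key).resolve_left hβδ
    have heq : (fun X : Matrix (Fin n) (Fin p) ℂ => A * X * Bᵀ + C * X * Dᵀ) (vecMulVec x y)
        = (fun X : Matrix (Fin n) (Fin p) ℂ => A * X * Bᵀ + C * X * Dᵀ) 0 := by
      simp only [hLzero, Matrix.mul_zero, Matrix.zero_mul, add_zero]
    exact hXne (hinj heq)
  · intro hcond
    obtain ⟨l0, hl0⟩ := hRegA
    obtain ⟨m0, hm0⟩ := hRegB
    set p1 : Polynomial ℂ :=
      ((A.map Polynomial.C) - (Polynomial.X : Polynomial ℂ) • (C.map Polynomial.C)).det with hp1def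
    set p2 : Polynomial ℂ :=
      ((D.map Polynomial.C) - (Polynomial.X : Polynomial ℂ) • ((-B).map Polynomial.C)).det with hp2def
    have he1 : ∀ r : ℂ, p1.eval r = (A - r • C).det := fun r => pencil_eval A C r
    have he2 : ∀ r : ℂ, p2.eval r = (D + r • B).det := by
      intro r
      rw [hp2def, pencil_eval]
      congr 1
      rw [smul_neg, sub_neg_eq_add]
    have hp1 : p1 ≠ 0 := fun h => hl0 (by rw [← he1 l0, h, Polynomial.eval_zero])
    have hp2 : p2 ≠ 0 := by
      intro h
      apply hm0
      have : D - m0 • B = D + (-m0) • B := by rw [neg_smul, ← sub_eq_add_neg]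
      rw [this, ← he2 (-m0), h, Polynomial.eval_zero]
    have hprod : p1 * p2 ≠ 0 := mul_ne_zero hp1 hp2
    obtain ⟨s, hs⟩ := Infinite.exists_notMem_finset (p1 * p2).roots.toFinset
    have hsroot : (p1 * p2).eval s ≠ 0 := fun h =>
      hs (Multiset.mem_toFinset.mpr ((Polynomial.mem_roots hprod).mpr h))
    have hP : (A - s • C).det ≠ 0 := fun h => hsroot (by rw [Polynomial.eval_mul, he1, h, zero_mul])
    have hQ : (D + s • B).det ≠ 0 := fun h => hsroot (by rw [Polynomial.eval_mul, he2, h, mul_zero])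
    set P : Matrix (Fin n) (Fin n) ℂ := A - s • C with hPdef
    set Q : Matrix (Fin p) (Fin p) ℂ := D + s • B with hQdef
    have hPu : IsUnit P.det := isUnit_iff_ne_zero.mpr hP
    have hQu : IsUnit Q.det := isUnit_iff_ne_zero.mpr hQ
    set C₁ : Matrix (Fin n) (Fin n) ℂ := P⁻¹ * C with hC1def
    set B₁ : Matrix (Fin p) (Fin p) ℂ := Q⁻¹ * B with hB1def
    have hker : ∀ X0 : Matrix (Fin n) (Fin p) ℂ,
        A * X0 * Bᵀ + C * X0 * Dᵀ = 0 → X0 = 0 := by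
      intro X0 hX
      have hPC : P * C₁ = C := by
        rw [hC1def, ← Matrix.mul_assoc, Matrix.mul_nonsing_inv P hPu, Matrix.one_mul]
      have hQB : Q * B₁ = B := by
        rw [hB1def, ← Matrix.mul_assoc, Matrix.mul_nonsing_inv Q hQu, Matrix.one_mul]
      have hBt : B₁ᵀ * Qᵀ = Bᵀ := by rw [← Matrix.transpose_mul, hQB]
      have hQt : Qᵀ = Dᵀ + s • Bᵀ := by rw [hQdef, Matrix.transpose_add, Matrix.transpose_smul]
      have key : P * (C₁ * X0 + X0 * B₁ᵀ) * Qᵀ = A * X0 * Bᵀ + C * X0 * Dᵀ := by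
        have t1 : P * (C₁ * X0) * Qᵀ = C * X0 * Dᵀ + s • (C * X0 * Bᵀ) := by
          rw [← Matrix.mul_assoc, hPC, hQt, Matrix.mul_add, Matrix.mul_smul]
        have t2 : P * (X0 * B₁ᵀ) * Qᵀ = A * X0 * Bᵀ - s • (C * X0 * Bᵀ) := by
          rw [Matrix.mul_assoc P (X0 * B₁ᵀ) Qᵀ, Matrix.mul_assoc X0 B₁ᵀ Qᵀ, hBt,
            ← Matrix.mul_assoc P X0 Bᵀ, hPdef, Matrix.sub_mul, Matrix.sub_mul,
            Matrix.smul_mul, Matrix.smul_mul]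
        rw [Matrix.mul_add, Matrix.add_mul, t1, t2]
        abel
      have hZ0 : P * (C₁ * X0 + X0 * B₁ᵀ) * Qᵀ = 0 := key.trans hX
      have hQtu : IsUnit (Qᵀ).det := by rwa [Matrix.det_transpose]
      have hZ : C₁ * X0 + X0 * B₁ᵀ = 0 := by
        have e : P⁻¹ * (P * (C₁ * X0 + X0 * B₁ᵀ) * Qᵀ) * (Qᵀ)⁻¹
            = C₁ * X0 + X0 * B₁ᵀ := by
          rw [← Matrix.mul_assoc P⁻¹, ← Matrix.mul_assoc P⁻¹,
            Matrix.nonsing_inv_mul P hPu, Matrix.one_mul, Matrix.mul_assoc,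
            Matrix.mul_nonsing_inv Qᵀ hQtu, Matrix.mul_one]
        rw [← e, hZ0, Matrix.mul_zero, Matrix.zero_mul]
      have hcomm : C₁ * X0 = X0 * (-B₁ᵀ) := by
        rw [Matrix.mul_neg]
        exact eq_neg_of_add_eq_zero_left hZ
      have h0 : X0 * (Polynomial.aeval (-B₁ᵀ) C₁.charpoly) = 0 := by
        rw [← aeval_comm C₁ (-B₁ᵀ) X0 hcomm, Matrix.aeval_self_charpoly, Matrix.zero_mul]
      set G : Matrix (Fin p) (Fin p) ℂ := Polynomial.aeval (-B₁ᵀ) C₁.charpoly with hGdef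
      have hfactor : ∀ r ∈ C₁.charpoly.roots, ((-B₁ᵀ) - r • 1).det ≠ 0 := by
        intro r hr hdet
        have hroot : (r • (1 : Matrix (Fin n) (Fin n) ℂ) - C₁).det = 0 := by
          rw [← charpoly_eval']
          exact (Polynomial.mem_roots'.mp hr).2
        -- turn the B-side determinant condition into a pencil statement
        have hdetB : (B₁ + r • 1).det = 0 := by
          have e : (-B₁ᵀ) - r • (1 : Matrix (Fin p) (Fin p) ℂ) = -((B₁ + r • 1)ᵀ) := by
            rw [Matrix.transpose_add, Matrix.transpose_smul, Matrix.transpose_one, neg_add]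
            abel
          rw [e, Matrix.det_neg, Matrix.det_transpose] at hdet
          rcases mul_eq_zero.mp hdet with h | h
          · exact absurd h (pow_ne_zero _ (by norm_num))
          · exact h
        have hdet1 : ((r : ℂ) • A - (r * s + 1) • C).det = 0 := by
          have e : P * (r • (1 : Matrix (Fin n) (Fin n) ℂ) - C₁)
              = r • A - (r * s + 1) • C := by
            rw [Matrix.mul_sub, Matrix.mul_smul, Matrix.mul_one, hPC, hPdef]
            module
          rw [← e, Matrix.det_mul, hroot, mul_zero]
        have hdet2 : ((r : ℂ) • D - (-(r * s + 1)) • B).det = 0 := by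
          have e : Q * (B₁ + r • (1 : Matrix (Fin p) (Fin p) ℂ))
              = r • D - (-(r * s + 1)) • B := by
            rw [Matrix.mul_add, Matrix.mul_smul, Matrix.mul_one, hQB, hQdef]
            module
          rw [← e, Matrix.det_mul, hdetB, mul_zero]
        have hpair1 : ((r * s + 1 : ℂ), r) ≠ (0, 0) := by
          intro h
          rw [Prod.mk.injEq] at h
          obtain ⟨h1, h2⟩ := h
          rw [h2, zero_mul, zero_add] at h1
          exact one_ne_zero h1
        have hpair2 : ((-(r * s + 1) : ℂ), r) ≠ (0, 0) := by
          intro h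
          rw [Prod.mk.injEq] at h
          obtain ⟨h1, h2⟩ := h
          rw [h2, zero_mul, zero_add] at h1
          exact one_ne_zero (neg_eq_zero.mp h1)
        have := hcond (r * s + 1) r (-(r * s + 1)) r hpair1 hdet1 hpair2 hdet2
        exact this (by ring)
      have hGdet : G.det ≠ 0 := by
        have e : G.det = (C₁.charpoly.roots.map fun r => ((-B₁ᵀ) - r • 1).det).prod := by
          rw [hGdef]
          conv_lhs => rw [(IsAlgClosed.splits C₁.charpoly).eq_prod_roots_of_monic
            (Matrix.charpoly_monic C₁)]
          exact det_aeval_prod _ _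
        rw [e]
        apply Multiset.prod_ne_zero
        intro hmem
        obtain ⟨r, hr, hr0⟩ := Multiset.mem_map.mp hmem
        exact hfactor r hr hr0
      calc X0 = X0 * G * G⁻¹ := by
            rw [Matrix.mul_assoc, Matrix.mul_nonsing_inv G (isUnit_iff_ne_zero.mpr hGdet),
              Matrix.mul_one]
        _ = 0 := by rw [h0, Matrix.zero_mul]
    let L : Matrix (Fin n) (Fin p) ℂ →ₗ[ℂ] Matrix (Fin n) (Fin p) ℂ :=
      { toFun := fun X0 => A * X0 * Bᵀ + C * X0 * Dᵀ
        map_add' := fun X1 X2 => by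
          simp only [Matrix.mul_add, Matrix.add_mul]
          abel
        map_smul' := fun c X1 => by
          simp only [Matrix.mul_smul, Matrix.smul_mul, smul_add, RingHom.id_apply] }
    have hLinj : Function.Injective L := (injective_iff_map_eq_zero L).mpr hker
    exact ⟨hLinj, LinearMap.injective_iff_surjective.mp hLinj⟩
end
end

section
/- Let W = [W1; W2] be an (m+p)×m continuous-time minimum-phase matrix over K = RatFunc ℂ, where the m×m block W1 is invertible over K, and set H := W2 W1⁻¹. Then the following are equivalent: (i) H is stable in the continuous-time sense, i.e. every pole α of H satisfies Re α ≤ 0; (ii) W1 is continuous-time minimum-phase. (The continuous-time version of the paper's Theorem 3.2, which the paper states holds by substituting continuous-time functions.) -/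
set_option synthInstance.maxHeartbeats 1000000
set_option maxHeartbeats 1000000
open Matrix

noncomputable section

/-- Continuous-time minimum phase: all poles in the open left half plane and full
column rank at every point of the open right half plane. -/
def MinPhaseC {n m : Type} [Fintype n] [Fintype m] (W : Matrix n m K) : Prop :=
  (∀ α : ℂ, MIsPole α W → α.re < 0) ∧
  (∀ α : ℂ, 0 < α.re → (MEval α W).rank = Fintype.card m)

namespace PfAux

/-- rational functions with no pole at `α` form a subring -/
def S (α : ℂ) : Subring K where
  carrier := {q | Polynomial.eval α (RatFunc.denom q) ≠ 0}
  one_mem' := by simp [RatFunc.denom_one]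
  zero_mem' := by simp [RatFunc.denom_zero]
  mul_mem' {a b} ha hb h := by
    have := Polynomial.eval_eq_zero_of_dvd_of_eval_eq_zero (RatFunc.denom_mul_dvd a b) h
    rw [Polynomial.eval_mul] at this
    rcases mul_eq_zero.mp this with h' | h' <;> [exact ha h'; exact hb h']
  add_mem' {a b} ha hb h := by
    have := Polynomial.eval_eq_zero_of_dvd_of_eval_eq_zero (RatFunc.denom_add_dvd a b) h
    rw [Polynomial.eval_mul] at this
    rcases mul_eq_zero.mp this with h' | h' <;> [exact ha h'; exact hb h']
  neg_mem' {a} ha h := by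
    have hrw : -a = algebraMap (Polynomial ℂ) K (-(RatFunc.num a)) /
        algebraMap (Polynomial ℂ) K (RatFunc.denom a) := by
      rw [map_neg, neg_div ((algebraMap (Polynomial ℂ) K) (RatFunc.denom a))
        ((algebraMap (Polynomial ℂ) K) (RatFunc.num a)), RatFunc.num_div_denom]
    have hdvd : RatFunc.denom (-a) ∣ RatFunc.denom a := by
      rw [hrw]; exact RatFunc.denom_div_dvd _ _
    exact ha (Polynomial.eval_eq_zero_of_dvd_of_eval_eq_zero hdvd h)

lemma det_map' {R S : Type*} [CommRing R] [CommRing S] {I : Type} [Fintype I] [DecidableEq I]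
    (f : R →+* S) (M : Matrix I I R) : (M.map f).det = f M.det := by
  rw [RingHom.map_det, RingHom.mapMatrix_apply]

lemma adjugate_map' {R S : Type*} [CommRing R] [CommRing S] {I : Type} [Fintype I] [DecidableEq I]
    (f : R →+* S) (M : Matrix I I R) : (M.map f).adjugate = M.adjugate.map f := by
  rw [← RingHom.mapMatrix_apply, ← RingHom.map_adjugate, RingHom.mapMatrix_apply]

lemma mem_S {α : ℂ} {q : K} : q ∈ S α ↔ Polynomial.eval α (RatFunc.denom q) ≠ 0 := Iff.rfl

lemma eval₂_id (α : ℂ) (p : Polynomial ℂ) :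
    Polynomial.eval₂ (RingHom.id ℂ) α p = Polynomial.eval α p := rfl

/-- Evaluation at `α` as a ring hom on the subring of functions without pole at `α`. -/
def evalHom (α : ℂ) : S α →+* ℂ where
  toFun q := evalAt α (q : K)
  map_one' := RatFunc.eval_one (RingHom.id ℂ) α
  map_zero' := RatFunc.eval_zero (RingHom.id ℂ) α
  map_mul' a b := by
    have ha : Polynomial.eval₂ (RingHom.id ℂ) α (RatFunc.denom (a : K)) ≠ 0 := a.2
    have hb : Polynomial.eval₂ (RingHom.id ℂ) α (RatFunc.denom (b : K)) ≠ 0 := b.2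
    exact RatFunc.eval_mul (hx := ha) (hy := hb)
  map_add' a b := by
    have ha : Polynomial.eval₂ (RingHom.id ℂ) α (RatFunc.denom (a : K)) ≠ 0 := a.2
    have hb : Polynomial.eval₂ (RingHom.id ℂ) α (RatFunc.denom (b : K)) ≠ 0 := b.2
    exact RatFunc.eval_add (hx := ha) (hy := hb)

variable {I J L : Type}

/-- lift a matrix with entries without pole at `α` to a matrix over `S α` -/
def lift (α : ℂ) (A : Matrix I J K) (h : ∀ i j, A i j ∈ S α) : Matrix I J (S α) :=
  fun i j => ⟨A i j, h i j⟩

lemma lift_subtype (α : ℂ) (A : Matrix I J K) (h : ∀ i j, A i j ∈ S α) :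
    (lift α A h).map (S α).subtype = A := rfl

lemma MEval_lift (α : ℂ) (A : Matrix I J K) (h : ∀ i j, A i j ∈ S α) :
    MEval α A = (lift α A h).map (evalHom α) := rfl

lemma mul_mem_S [Fintype J] (α : ℂ) (A : Matrix I J K) (B : Matrix J L K)
    (hA : ∀ i j, A i j ∈ S α) (hB : ∀ i j, B i j ∈ S α) :
    ∀ i j, (A * B) i j ∈ S α := by
  intro i j
  have : A * B = (lift α A hA * lift α B hB).map (S α).subtype := by
    rw [Matrix.map_mul, lift_subtype, lift_subtype]
  rw [this]
  exact SetLike.coe_mem _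

lemma MEval_mul [Fintype J] (α : ℂ) (A : Matrix I J K) (B : Matrix J L K)
    (hA : ∀ i j, A i j ∈ S α) (hB : ∀ i j, B i j ∈ S α) :
    MEval α (A * B) = MEval α A * MEval α B := by
  have h1 : A * B = (lift α A hA * lift α B hB).map (S α).subtype := by
    rw [Matrix.map_mul, lift_subtype, lift_subtype]
  have h2 : ∀ i j, (A * B) i j ∈ S α := mul_mem_S α A B hA hB
  have h3 : lift α (A * B) h2 = lift α A hA * lift α B hB := by
    apply Matrix.ext
    intro i j
    apply Subtype.ext
    have := congrFun (congrFun h1 i) j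
    simpa [lift] using this
  rw [MEval_lift α _ h2, h3, Matrix.map_mul, ← MEval_lift α A hA, ← MEval_lift α B hB]

lemma det_mem_S [Fintype I] [DecidableEq I] (α : ℂ) (A : Matrix I I K)
    (hA : ∀ i j, A i j ∈ S α) : A.det ∈ S α := by
  have h1 := det_map' (S α).subtype (lift α A hA)
  rw [lift_subtype] at h1
  rw [h1]; exact SetLike.coe_mem _

lemma evalAt_det [Fintype I] [DecidableEq I] (α : ℂ) (A : Matrix I I K)
    (hA : ∀ i j, A i j ∈ S α) : evalAt α A.det = (MEval α A).det := by
  have h1 := det_map' (S α).subtype (lift α A hA)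
  rw [lift_subtype] at h1
  have h2 : (MEval α A).det = evalHom α (lift α A hA).det := by
    rw [MEval_lift α A hA, det_map']
  rw [h2, h1]; rfl

lemma adjugate_mem_S [Fintype I] [DecidableEq I] (α : ℂ) (A : Matrix I I K)
    (hA : ∀ i j, A i j ∈ S α) : ∀ i j, A.adjugate i j ∈ S α := by
  intro i j
  have h1 := adjugate_map' (S α).subtype (lift α A hA)
  rw [lift_subtype] at h1
  rw [h1]; exact SetLike.coe_mem _

lemma inv_mem_S (α : ℂ) (q : K) (hq : q ∈ S α) (h0 : evalAt α q ≠ 0) : q⁻¹ ∈ S α := by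
  have hnum : Polynomial.eval α (RatFunc.num q) ≠ 0 := by
    intro h
    apply h0
    show (RatFunc.num q).eval₂ (RingHom.id ℂ) α / (RatFunc.denom q).eval₂ (RingHom.id ℂ) α = 0
    rw [eval₂_id, h, zero_div]
  have hrw : q⁻¹ = algebraMap (Polynomial ℂ) K (RatFunc.denom q) /
      algebraMap (Polynomial ℂ) K (RatFunc.num q) := by
    rw [← inv_div, RatFunc.num_div_denom]
  have hdvd : RatFunc.denom q⁻¹ ∣ RatFunc.num q := by
    rw [hrw]; exact RatFunc.denom_div_dvd _ _
  exact fun h => hnum (Polynomial.eval_eq_zero_of_dvd_of_eval_eq_zero hdvd h)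

lemma notPole_of_mem {α : ℂ} {q : K} (h : q ∈ S α) : ¬ IsPole α q := h

/-- full column rank implies trivial kernel -/
lemma mulVec_eq_zero {I : Type} [Fintype I] {m : ℕ} (A : Matrix I (Fin m) ℂ)
    (h : A.rank = m) {v : Fin m → ℂ} (hv : A.mulVec v = 0) : v = 0 := by
  by_contra hv0
  have hker : (0 : ℕ) < Module.finrank ℂ (LinearMap.ker A.mulVecLin) := by
    rw [Module.finrank_pos_iff_exists_ne_zero]
    exact ⟨⟨v, by simpa [Matrix.mulVecLin] using hv⟩, by simpa [Subtype.ext_iff] using hv0⟩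
  have hrn := LinearMap.finrank_range_add_finrank_ker A.mulVecLin
  rw [Module.finrank_pi] at hrn
  have : A.rank + Module.finrank ℂ (LinearMap.ker A.mulVecLin) = m := by
    simpa [Matrix.rank, Fintype.card_fin] using hrn
  omega

end PfAux

open PfAux

theorem H_stable_iff_W1_minimum_phase_continuous (m p : ℕ)
    (W1 : Matrix (Fin m) (Fin m) K) (W2 : Matrix (Fin p) (Fin m) K)
    (hW1 : IsUnit W1.det)
    (hWmp : MinPhaseC (Matrix.fromRows W1 W2)) :
    (∀ α : ℂ, MIsPole α (W2 * W1⁻¹) → α.re ≤ 0) ↔ MinPhaseC W1 := by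
  obtain ⟨hpole, hrank⟩ := hWmp
  -- poles of W1 (and W2) are poles of the full matrix
  have hW1pole : ∀ α : ℂ, MIsPole α W1 → α.re < 0 := by
    rintro α ⟨i, j, h⟩
    exact hpole α ⟨Sum.inl i, j, h⟩
  -- entries of W1, W2 have no pole at any α with 0 < re α
  have hW1S : ∀ α : ℂ, 0 < α.re → ∀ i j, W1 i j ∈ S α := by
    intro α hα i j h
    exact absurd (hW1pole α ⟨i, j, by simpa [IsPole] using h⟩) (by linarith)
  have hW2S : ∀ α : ℂ, 0 < α.re → ∀ i j, W2 i j ∈ S α := by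
    intro α hα i j h
    have := hpole α ⟨Sum.inr i, j, by simpa [IsPole] using h⟩
    linarith
  -- evaluation of the full matrix is the fromRows of the evaluations
  have hMEvalRows : ∀ α : ℂ, MEval α (Matrix.fromRows W1 W2) =
      Matrix.fromRows (MEval α W1) (MEval α W2) := by
    intro α
    apply Matrix.ext
    rintro (i | i) j <;> rfl
  -- key: if W1(α) is invertible and H has no pole at α then W2(α) = H(α) W1(α)
  constructor
  · -- H stable → W1 minimum phase
    intro hH
    refine ⟨hW1pole, fun α hα => ?_⟩
    -- show MEval α W1 invertible
    have hHS : ∀ i j, (W2 * W1⁻¹) i j ∈ S α := by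
      intro i j h
      have := hH α ⟨i, j, by simpa [IsPole] using h⟩
      linarith
    have hinv : IsUnit (MEval α W1).det := by
      rw [isUnit_iff_ne_zero]
      intro hdet
      obtain ⟨v, hv0, hv⟩ := Matrix.exists_mulVec_eq_zero_iff.mpr hdet
      -- W2(α) v = 0 as well, since W2 = (W2 W1⁻¹) W1
      have hW2eq : W2 = (W2 * W1⁻¹) * W1 := by
        rw [Matrix.mul_assoc, Matrix.nonsing_inv_mul W1 hW1, Matrix.mul_one]
      have hW2ev : MEval α W2 = MEval α (W2 * W1⁻¹) * MEval α W1 := by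
        conv_lhs => rw [hW2eq]
        exact MEval_mul α _ _ hHS (hW1S α hα)
      have hW2v : (MEval α W2).mulVec v = 0 := by
        rw [hW2ev, ← Matrix.mulVec_mulVec, hv, Matrix.mulVec_zero]
      -- but the full matrix has full column rank
      have hfull : (MEval α (Matrix.fromRows W1 W2)).mulVec v = 0 := by
        rw [hMEvalRows, Matrix.fromRows_mulVec, hv, hW2v]
        simp
      have := mulVec_eq_zero _ (by simpa using hrank α hα) hfull
      exact hv0 this
    have : IsUnit (MEval α W1) := (Matrix.isUnit_iff_isUnit_det _).mpr hinv
    simpa using Matrix.rank_of_isUnit _ this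
  · -- W1 minimum phase → H stable
    rintro ⟨_, hW1rank⟩ α hpoleH
    by_contra hre
    push_neg at hre
    -- at α all entries of W2 and W1⁻¹ have no pole, contradicting hpoleH
    have hW1Sα := hW1S α hre
    have hdet0 : evalAt α W1.det ≠ 0 := by
      rw [evalAt_det α W1 hW1Sα]
      intro hdet
      obtain ⟨v, hv0, hv⟩ := Matrix.exists_mulVec_eq_zero_iff.mpr hdet
      exact hv0 (mulVec_eq_zero _ (by simpa using hW1rank α hre) hv)
    have hinvS : ∀ i j, W1⁻¹ i j ∈ S α := by
      intro i j
      have : W1⁻¹ i j = W1.det⁻¹ * W1.adjugate i j := by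
        rw [Matrix.inv_def, Ring.inverse_eq_inv', Matrix.smul_apply, smul_eq_mul]
      rw [this]
      exact mul_mem (inv_mem_S α W1.det (det_mem_S α W1 hW1Sα) hdet0)
        (adjugate_mem_S α W1 hW1Sα i j)
    obtain ⟨i, j, hij⟩ := hpoleH
    exact notPole_of_mem (mul_mem_S α W2 W1⁻¹ (hW2S α hre) hinvS i j) hij
end
end
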